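/- arXiv:2506.00059 — 4 statements merged into one kernel-verified Lean document; each statement's English description precedes it below -/
import Mathlib

section
/- Fix 0 < m ≤ 1/2, m ≤ M, and T > 0. For every ε > 0 there exists n₀ such that for all n ≥ n₀ and all SIS parameters p = (W, z(0), γ, π) with m ≤ w_{ij} = w_{ji} ≤ M, m ≤ z_i(0) ≤ 1−m, 0 ≤ γ_i ≤ M, and π_i = 1/n for all i, there exists a symmetric matrix Ŵ with entries in [0, 2M] such that ‖W − Ŵ‖_□ ≥ m/16 > 0 and sup_{0 ≤ t ≤ T} ‖z(t) − ẑ(t)‖_{1,π} < ε, where z and ẑ are the trajectories of the SIS model with (W, z(0), γ, π) and (Ŵ, z(0), γ, π) respectively. -/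
lemma pairing_aux {α κ : Type*} [DecidableEq α] [DecidableEq κ] [Fintype κ] (key : α → κ) :
    ∀ N : ℕ, ∀ s : Finset α, s.card = N →
    ∃ P : Finset (α × α),
      (∀ p ∈ P, p.1 ∈ s ∧ p.2 ∈ s ∧ key p.1 = key p.2 ∧ p.1 ≠ p.2) ∧
      (∀ p ∈ P, ∀ q ∈ P, p ≠ q → p.1 ≠ q.1 ∧ p.1 ≠ q.2 ∧ p.2 ≠ q.1 ∧ p.2 ≠ q.2) ∧
      s.card ≤ 2 * P.card + Fintype.card κ := by
  intro N
  induction N using Nat.strong_induction_on with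
  | _ N ih =>
    intro s hs
    by_cases h : ∃ a ∈ s, ∃ b ∈ s, a ≠ b ∧ key a = key b
    · obtain ⟨a, ha, b, hb, hab, hk⟩ := h
      have hsub : ({a, b} : Finset α) ⊆ s := by
        intro x hx
        rcases Finset.mem_insert.1 hx with h1 | h1
        · exact h1 ▸ ha
        · exact (Finset.mem_singleton.1 h1) ▸ hb
      have hcard2 : ({a, b} : Finset α).card = 2 := by
        rw [Finset.card_insert_of_notMem (by simp [hab]), Finset.card_singleton]
      have hge2 : 2 ≤ N := by
        rw [← hs, ← hcard2]; exact Finset.card_le_card hsub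
      have hlt : (s \ {a, b}).card < N := by
        rw [Finset.card_sdiff_of_subset hsub, hcard2, hs]; omega
      obtain ⟨P', hP1, hP2, hP3⟩ := ih _ hlt (s \ {a, b}) rfl
      have hmemP' : ∀ p ∈ P', p.1 ≠ a ∧ p.1 ≠ b ∧ p.2 ≠ a ∧ p.2 ≠ b := by
        intro p hp
        obtain ⟨h1, h2, -, -⟩ := hP1 p hp
        have h1' := Finset.mem_sdiff.1 h1
        have h2' := Finset.mem_sdiff.1 h2
        refine ⟨fun he => h1'.2 ?_, fun he => h1'.2 ?_, fun he => h2'.2 ?_, fun he => h2'.2 ?_⟩ <;>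
          simp [he]
      have hnot : (a, b) ∉ P' := fun hmem => (hmemP' _ hmem).1 rfl
      refine ⟨insert (a, b) P', ?_, ?_, ?_⟩
      · intro p hp
        rcases Finset.mem_insert.1 hp with rfl | hp'
        · exact ⟨ha, hb, hk, hab⟩
        · obtain ⟨h1, h2, h3, h4⟩ := hP1 p hp'
          exact ⟨(Finset.mem_sdiff.1 h1).1, (Finset.mem_sdiff.1 h2).1, h3, h4⟩
      · intro p hp q hq hpq
        rcases Finset.mem_insert.1 hp with rfl | hp' <;> rcases Finset.mem_insert.1 hq with rfl | hq'
        · exact absurd rfl hpq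
        · obtain ⟨q1, q2, q3, q4⟩ := hmemP' q hq'
          exact ⟨q1.symm, q3.symm, q2.symm, q4.symm⟩
        · obtain ⟨p1, p2, p3, p4⟩ := hmemP' p hp'
          exact ⟨p1, p2, p3, p4⟩
        · exact hP2 p hp' q hq' hpq
      · rw [Finset.card_insert_of_notMem hnot]
        have : s.card = (s \ {a, b}).card + 2 := by
          rw [Finset.card_sdiff_of_subset hsub, hcard2]; omega
        omega
    · push_neg at h
      refine ⟨∅, by simp, by simp, ?_⟩
      have hinj : (s : Set α).InjOn key := by
        intro x hx y hy hxy
        by_contra hne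
        exact h x hx y hy hne hxy
      have h1 : s.card ≤ Fintype.card κ :=
        (Finset.card_le_card_of_injOn key (fun _ _ => Finset.mem_univ _) hinj).trans
          Finset.card_univ.le
      omega

lemma floor_div_close {δ a b : ℝ} (hδ : 0 < δ) (ha : 0 ≤ a) (hb : 0 ≤ b)
    (h : ⌊a / δ⌋₊ = ⌊b / δ⌋₊) : |a - b| < δ := by
  have h1 : (⌊a / δ⌋₊ : ℝ) ≤ a / δ := Nat.floor_le (by positivity)
  have h2 : a / δ < ⌊a / δ⌋₊ + 1 := Nat.lt_floor_add_one _
  have h3 : (⌊b / δ⌋₊ : ℝ) ≤ b / δ := Nat.floor_le (by positivity)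
  have h4 : b / δ < ⌊b / δ⌋₊ + 1 := Nat.lt_floor_add_one _
  rw [h] at h1 h2
  have ea : a = δ * (a / δ) := by field_simp
  have eb : b = δ * (b / δ) := by field_simp
  rw [abs_sub_lt_iff, ea, eb, ← mul_sub, ← mul_sub]
  constructor
  · calc δ * (a / δ - b / δ) < δ * 1 := by
          apply mul_lt_mul_of_pos_left _ hδ; linarith
      _ = δ := mul_one δ
  · calc δ * (b / δ - a / δ) < δ * 1 := by
          apply mul_lt_mul_of_pos_left _ hδ; linarith
      _ = δ := mul_one δ

lemma sum_bound {n : ℕ} (M : ℝ) (hM : 0 < M) (hn : 0 < n)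
    (W : Matrix (Fin n) (Fin n) ℝ) (pv : Fin n → ℝ) (y : Fin n → ℝ)
    (hW : ∀ i j, W i j ∈ Set.Icc (0:ℝ) M)
    (hpv : ∀ i, pv i = 1 / (n : ℝ))
    (hy : ∀ j, y j ∈ Set.Icc (0:ℝ) 1) (i : Fin n) :
    0 ≤ (∑ j, W i j * pv j * y j) ∧ (∑ j, W i j * pv j * y j) ≤ M := by
  have hnR : (0:ℝ) < n := by exact_mod_cast hn
  constructor
  · apply Finset.sum_nonneg
    intro j _
    have h1 := (hW i j).1
    have h2 := (hy j).1
    have h3 : 0 ≤ pv j := by rw [hpv]; positivity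
    positivity
  · calc (∑ j, W i j * pv j * y j) ≤ ∑ _j : Fin n, M * (1 / n) := by
          apply Finset.sum_le_sum
          intro j _
          rw [hpv]
          have h1 := hW i j
          have h2 := hy j
          have h3 : (0:ℝ) ≤ 1 / n := by positivity
          have h4 : W i j * (1/(n:ℝ)) ≤ M * (1/(n:ℝ)) :=
            mul_le_mul_of_nonneg_right h1.2 h3
          have h5 : W i j * (1/(n:ℝ)) * y j ≤ M * (1/(n:ℝ)) * 1 :=
            mul_le_mul h4 h2.2 h2.1 (by positivity)
          linarith
      _ = M := by
          rw [Finset.sum_const, Finset.card_univ, Fintype.card_fin, nsmul_eq_mul]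
          field_simp

lemma traj_lipschitz {n : ℕ} (M : ℝ) (hM : 0 < M) (hn : 0 < n)
    (W : Matrix (Fin n) (Fin n) ℝ) (pv γ : Fin n → ℝ) (z : ℝ → Fin n → ℝ)
    (hW : ∀ i j, W i j ∈ Set.Icc (0:ℝ) M)
    (hpv : ∀ i, pv i = 1 / (n : ℝ))
    (hγ : ∀ i, γ i ∈ Set.Icc (0:ℝ) M)
    (hode : ∀ i, ∀ t ∈ Set.Ici (0:ℝ), HasDerivWithinAt (fun s => z s i)
      ((1 - z t i) * (∑ j, W i j * pv j * z t j) - γ i * z t i) (Set.Ici 0) t)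
    (hbox : ∀ t ∈ Set.Ici (0:ℝ), ∀ i, z t i ∈ Set.Icc (0:ℝ) 1) :
    ∀ i, ∀ s₁ ∈ Set.Ici (0:ℝ), ∀ s₂ ∈ Set.Ici (0:ℝ),
      |z s₂ i - z s₁ i| ≤ M * |s₂ - s₁| := by
  have hdb : ∀ i, ∀ x ∈ Set.Ici (0:ℝ),
      ‖(1 - z x i) * (∑ j, W i j * pv j * z x j) - γ i * z x i‖ ≤ M := by
    intro i x hx
    have h1 := hbox x hx i
    have h2 := hγ i
    have h3 := sum_bound M hM hn W pv (z x) hW hpv (fun j => hbox x hx j) i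
    rw [Real.norm_eq_abs, abs_le]
    constructor
    · nlinarith [h1.1, h1.2, h2.1, h2.2, h3.1, h3.2]
    · nlinarith [h1.1, h1.2, h2.1, h2.2, h3.1, h3.2]
  intro i s₁ h1 s₂ h2
  have := Convex.norm_image_sub_le_of_norm_hasDerivWithin_le
    (fun x hx => hode i x hx) (fun x hx => hdb i x hx) (convex_Ici 0) h1 h2
  simpa [Real.norm_eq_abs] using this

lemma gronwall_traj {n : ℕ} (m M T η : ℝ) (hm : 0 < m) (hmM : m ≤ M) (hT : 0 < T)
    (hη : 0 < η) (hn : 0 < n)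
    (W : Matrix (Fin n) (Fin n) ℝ) (pv γ u : Fin n → ℝ) (z z' : ℝ → Fin n → ℝ)
    (hW : ∀ i j, W i j ∈ Set.Icc m M)
    (hpv : ∀ i, pv i = 1 / (n : ℝ))
    (hγ : ∀ i, γ i ∈ Set.Icc (0:ℝ) M)
    (huabs : ∀ i, |u i| ≤ 1)
    (horth : ∀ s ∈ Set.Icc (0:ℝ) T, |∑ i, u i * z s i| ≤ η * n)
    (hode : ∀ i, ∀ t ∈ Set.Ici (0:ℝ), HasDerivWithinAt (fun s => z s i)
      ((1 - z t i) * (∑ j, W i j * pv j * z t j) - γ i * z t i) (Set.Ici 0) t)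
    (hbox : ∀ t ∈ Set.Ici (0:ℝ), ∀ i, z t i ∈ Set.Icc (0:ℝ) 1)
    (hz'0 : z' 0 = z 0)
    (hode' : ∀ i, ∀ t ∈ Set.Ici (0:ℝ), HasDerivWithinAt (fun s => z' s i)
      ((1 - z' t i) * (∑ j, (W i j - m * (u i * u j)) * pv j * z' t j) - γ i * z' t i)
      (Set.Ici 0) t)
    (hbox' : ∀ t ∈ Set.Ici (0:ℝ), ∀ i, z' t i ∈ Set.Icc (0:ℝ) 1) :
    ∀ t ∈ Set.Icc (0:ℝ) T, ∀ i, |z t i - z' t i| ≤ m * T * Real.exp (4*M*T) * η := by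
  have hM : 0 < M := lt_of_lt_of_le hm hmM
  have hnR : (0:ℝ) < n := by exact_mod_cast hn
  have hW0 : ∀ i j, W i j ∈ Set.Icc (0:ℝ) M := fun i j =>
    ⟨le_trans hm.le (hW i j).1, (hW i j).2⟩
  set f : ℝ → Fin n → ℝ := fun s => z s - z' s with hf
  set g : ℝ → Fin n → ℝ := fun s i =>
    ((1 - z s i) * (∑ j, W i j * pv j * z s j) - γ i * z s i) -
    ((1 - z' s i) * (∑ j, (W i j - m * (u i * u j)) * pv j * z' s j)
      - γ i * z' s i) with hg
  have hfderiv : ∀ x ∈ Set.Ico (0:ℝ) T, HasDerivWithinAt f (g x) (Set.Ici x) x := by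
    intro x hx
    rw [hasDerivWithinAt_pi]
    intro i
    have h1 := (hode i x (Set.mem_Ici.2 hx.1)).sub (hode' i x (Set.mem_Ici.2 hx.1))
    exact h1.mono (Set.Ici_subset_Ici.2 hx.1)
  have hfcont : ContinuousOn f (Set.Icc 0 T) := by
    rw [continuousOn_pi]
    intro i x hx
    have h1 := ((hode i x hx.1).sub (hode' i x hx.1)).continuousWithinAt
    exact h1.mono (fun y hy => hy.1)
  have h0 : ‖f 0‖ ≤ 0 := by simp [hf, hz'0]
  have hbound : ∀ x ∈ Set.Ico (0:ℝ) T, ‖g x‖ ≤ 4 * M * ‖f x‖ + m * η := by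
    intro x hx
    have hx0 : (0:ℝ) ≤ x := hx.1
    have hxIcc : x ∈ Set.Icc (0:ℝ) T := ⟨hx.1, hx.2.le⟩
    have hFnn : (0:ℝ) ≤ ‖f x‖ := norm_nonneg _
    rw [pi_norm_le_iff_of_nonneg (by positivity)]
    intro i
    have hFi : ∀ j, |z x j - z' x j| ≤ ‖f x‖ := by
      intro j
      have := norm_le_pi_norm (f x) j
      simpa [hf, Real.norm_eq_abs] using this
    have hsumF : ∑ j, |z x j - z' x j| ≤ n * ‖f x‖ := by
      calc ∑ j, |z x j - z' x j| ≤ ∑ _j : Fin n, ‖f x‖ := Finset.sum_le_sum fun j _ => hFi j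
        _ = n * ‖f x‖ := by
            rw [Finset.sum_const, Finset.card_univ, Fintype.card_fin, nsmul_eq_mul]
    simp only [hg]
    rw [Real.norm_eq_abs]
    set G := ∑ j, W i j * pv j * z x j with hG
    set H := ∑ j, W i j * pv j * z' x j with hH
    set S2 := ∑ j, u j * z' x j with hS2
    have hGH : |G - H| ≤ M * ‖f x‖ := by
      rw [hG, hH, ← Finset.sum_sub_distrib]
      calc |∑ j, (W i j * pv j * z x j - W i j * pv j * z' x j)|
          ≤ ∑ j, |W i j * pv j * z x j - W i j * pv j * z' x j| :=
            Finset.abs_sum_le_sum_abs _ _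
        _ ≤ ∑ j, M * (1/(n:ℝ)) * |z x j - z' x j| := by
            apply Finset.sum_le_sum
            intro j _
            have h1 : |W i j * pv j| ≤ M * (1/(n:ℝ)) := by
              rw [abs_mul, hpv, abs_of_nonneg (by positivity : (0:ℝ) ≤ 1/(n:ℝ))]
              apply mul_le_mul_of_nonneg_right _ (by positivity)
              rw [abs_of_nonneg (hW0 i j).1]
              exact (hW0 i j).2
            have he : W i j * pv j * z x j - W i j * pv j * z' x j
                = W i j * pv j * (z x j - z' x j) := by ring
            rw [he, abs_mul]
            exact mul_le_mul h1 le_rfl (abs_nonneg _) (by positivity)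
        _ = M * (1/(n:ℝ)) * ∑ j, |z x j - z' x j| := by rw [← Finset.mul_sum]
        _ ≤ M * (1/(n:ℝ)) * ((n:ℝ) * ‖f x‖) := by
            apply mul_le_mul_of_nonneg_left hsumF (by positivity)
        _ = M * ‖f x‖ := by field_simp
    have hHb : |H| ≤ M := by
      rw [hH]
      have h1 := sum_bound M hM hn W pv (z' x) hW0 hpv (fun j => hbox' x hx0 j) i
      rw [abs_le]
      exact ⟨by linarith [h1.1], h1.2⟩
    have hS2b : |S2| ≤ (n:ℝ) * ‖f x‖ + η * n := by
      have h1 : |S2 - ∑ j, u j * z x j| ≤ (n:ℝ) * ‖f x‖ := by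
        rw [hS2, ← Finset.sum_sub_distrib]
        calc |∑ j, (u j * z' x j - u j * z x j)|
            ≤ ∑ j, |u j * z' x j - u j * z x j| := Finset.abs_sum_le_sum_abs _ _
          _ ≤ ∑ j, |z x j - z' x j| := by
              apply Finset.sum_le_sum
              intro j _
              have he : u j * z' x j - u j * z x j = -(u j * (z x j - z' x j)) := by ring
              rw [he, abs_neg, abs_mul]
              calc |u j| * |z x j - z' x j| ≤ 1 * |z x j - z' x j| :=
                    mul_le_mul_of_nonneg_right (huabs j) (abs_nonneg _)
                _ = _ := one_mul _
          _ ≤ (n:ℝ) * ‖f x‖ := hsumF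
      have h2 := horth x hxIcc
      calc |S2| = |(S2 - ∑ j, u j * z x j) + ∑ j, u j * z x j| := by ring_nf
        _ ≤ |S2 - ∑ j, u j * z x j| + |∑ j, u j * z x j| := abs_add_le _ _
        _ ≤ (n:ℝ) * ‖f x‖ + η * n := add_le_add h1 h2
    have hG' : (∑ j, (W i j - m * (u i * u j)) * pv j * z' x j)
        = H - m * u i * ((1/(n:ℝ)) * S2) := by
      have h1 : H - m * u i * ((1/(n:ℝ)) * S2)
          = ∑ j, (W i j * pv j * z' x j - m * u i * ((1/(n:ℝ)) * (u j * z' x j))) := by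
        rw [hH, hS2, Finset.mul_sum, Finset.mul_sum, ← Finset.sum_sub_distrib]
      rw [h1]
      apply Finset.sum_congr rfl
      intro j _
      rw [hpv]
      ring
    rw [hG']
    have hid : (1 - z x i) * G - γ i * z x i
        - ((1 - z' x i) * (H - m * u i * ((1/(n:ℝ)) * S2)) - γ i * z' x i)
        = (1 - z x i) * (G - H) + (z' x i - z x i) * H
          + (1 - z' x i) * (m * u i * ((1/(n:ℝ)) * S2)) - γ i * (z x i - z' x i) := by
      ring
    rw [hid]
    have hz1 : |1 - z x i| ≤ 1 := by
      have h1 := hbox x hx0 i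
      rw [abs_le]; exact ⟨by linarith [h1.2], by linarith [h1.1]⟩
    have hz1' : |1 - z' x i| ≤ 1 := by
      have h1 := hbox' x hx0 i
      rw [abs_le]; exact ⟨by linarith [h1.2], by linarith [h1.1]⟩
    have e1 : |(1 - z x i) * (G - H)| ≤ M * ‖f x‖ := by
      rw [abs_mul]
      calc |1 - z x i| * |G - H| ≤ 1 * (M * ‖f x‖) :=
            mul_le_mul hz1 hGH (abs_nonneg _) one_pos.le
        _ = M * ‖f x‖ := one_mul _
    have e2 : |(z' x i - z x i) * H| ≤ ‖f x‖ * M := by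
      rw [abs_mul, abs_sub_comm]
      exact mul_le_mul (hFi i) hHb (abs_nonneg _) hFnn
    have e3 : |(1 - z' x i) * (m * u i * ((1/(n:ℝ)) * S2))| ≤ m * ‖f x‖ + m * η := by
      rw [abs_mul]
      have h1 : |m * u i * ((1/(n:ℝ)) * S2)| ≤ m * (‖f x‖ + η) := by
        rw [abs_mul, abs_mul, abs_mul]
        have hmu : |m| * |u i| ≤ m := by
          rw [abs_of_nonneg hm.le]
          nlinarith [huabs i, abs_nonneg (u i)]
        have hinv : |1/(n:ℝ)| * |S2| ≤ ‖f x‖ + η := by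
          rw [abs_of_nonneg (by positivity : (0:ℝ) ≤ 1/(n:ℝ))]
          calc (1/(n:ℝ)) * |S2| ≤ (1/(n:ℝ)) * ((n:ℝ) * ‖f x‖ + η * n) :=
                mul_le_mul_of_nonneg_left hS2b (by positivity)
            _ = ‖f x‖ + η := by field_simp
        exact mul_le_mul hmu hinv (by positivity) hm.le
      calc |1 - z' x i| * |m * u i * ((1/(n:ℝ)) * S2)| ≤ 1 * (m * (‖f x‖ + η)) :=
            mul_le_mul hz1' h1 (abs_nonneg _) one_pos.le
        _ = m * ‖f x‖ + m * η := by ring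
    have e4 : |γ i * (z x i - z' x i)| ≤ M * ‖f x‖ := by
      rw [abs_mul]
      have hγi := hγ i
      have : |γ i| ≤ M := by rw [abs_of_nonneg hγi.1]; exact hγi.2
      exact mul_le_mul this (hFi i) (abs_nonneg _) hM.le
    have tineq : |(1 - z x i) * (G - H) + (z' x i - z x i) * H
          + (1 - z' x i) * (m * u i * ((1/(n:ℝ)) * S2)) - γ i * (z x i - z' x i)|
        ≤ |(1 - z x i) * (G - H)| + |(z' x i - z x i) * H|
          + |(1 - z' x i) * (m * u i * ((1/(n:ℝ)) * S2))| + |γ i * (z x i - z' x i)| := by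
      calc |(1 - z x i) * (G - H) + (z' x i - z x i) * H
            + (1 - z' x i) * (m * u i * ((1/(n:ℝ)) * S2)) - γ i * (z x i - z' x i)|
          ≤ |(1 - z x i) * (G - H) + (z' x i - z x i) * H
            + (1 - z' x i) * (m * u i * ((1/(n:ℝ)) * S2))| + |γ i * (z x i - z' x i)| :=
            abs_sub _ _
        _ ≤ |(1 - z x i) * (G - H) + (z' x i - z x i) * H|
            + |(1 - z' x i) * (m * u i * ((1/(n:ℝ)) * S2))| + |γ i * (z x i - z' x i)| := by
            have := abs_add_le ((1 - z x i) * (G - H) + (z' x i - z x i) * H)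
              ((1 - z' x i) * (m * u i * ((1/(n:ℝ)) * S2)))
            linarith
        _ ≤ _ := by
            have := abs_add_le ((1 - z x i) * (G - H)) ((z' x i - z x i) * H)
            linarith
    calc |(1 - z x i) * (G - H) + (z' x i - z x i) * H
          + (1 - z' x i) * (m * u i * ((1/(n:ℝ)) * S2)) - γ i * (z x i - z' x i)|
        ≤ |(1 - z x i) * (G - H)| + |(z' x i - z x i) * H|
          + |(1 - z' x i) * (m * u i * ((1/(n:ℝ)) * S2))| + |γ i * (z x i - z' x i)| := tineq
      _ ≤ M * ‖f x‖ + ‖f x‖ * M + (m * ‖f x‖ + m * η) + M * ‖f x‖ := by linarith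
      _ ≤ 4 * M * ‖f x‖ + m * η := by
          have hmF := mul_le_mul_of_nonneg_right hmM hFnn
          linarith
  intro t ht i
  have hgron := norm_le_gronwallBound_of_norm_deriv_right_le hfcont hfderiv h0 hbound t ht
  simp only [gronwallBound_of_K_ne_0 (by positivity : (4:ℝ) * M ≠ 0), sub_zero,
    zero_mul, zero_add] at hgron
  have hexp1 : Real.exp (4*M*t) - 1 ≤ 4*M*T*Real.exp (4*M*T) := by
    have ht0 : (0:ℝ) ≤ t := ht.1
    have h1 : Real.exp (4*M*t) - 1 ≤ (4*M*t) * Real.exp (4*M*t) := by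
      have ha := Real.add_one_le_exp (-(4*M*t))
      have hb : Real.exp (-(4*M*t)) * Real.exp (4*M*t) = 1 := by
        rw [← Real.exp_add]; simp
      have hcpos := Real.exp_pos (4*M*t)
      nlinarith
    have h2 : (4*M*t) * Real.exp (4*M*t) ≤ (4*M*T) * Real.exp (4*M*T) := by
      have hh1 := ht.2
      have hh2 : Real.exp (4*M*t) ≤ Real.exp (4*M*T) :=
        Real.exp_le_exp.2 (by nlinarith)
      exact mul_le_mul (by nlinarith : 4*M*t ≤ 4*M*T) hh2 (Real.exp_pos _).le
        (by positivity)
    linarith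
  have hfinal : ‖f t‖ ≤ m * T * Real.exp (4*M*T) * η := by
    have h3 : m * η / (4*M) * (Real.exp (4*M*t) - 1)
        ≤ m * η / (4*M) * (4*M*T*Real.exp (4*M*T)) :=
      mul_le_mul_of_nonneg_left hexp1 (by positivity)
    have h4 : m * η / (4*M) * (4*M*T*Real.exp (4*M*T)) = m * T * Real.exp (4*M*T) * η := by
      field_simp
    calc ‖f t‖ ≤ m * η / (4*M) * (Real.exp (4*M*t) - 1) := hgron
      _ ≤ m * η / (4*M) * (4*M*T*Real.exp (4*M*T)) := h3
      _ = m * T * Real.exp (4*M*T) * η := h4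
  have := norm_le_pi_norm (f t) i
  rw [Real.norm_eq_abs] at this
  calc |z t i - z' t i| = |f t i| := by simp [hf]
    _ ≤ ‖f t‖ := this
    _ ≤ m * T * Real.exp (4*M*T) * η := hfinal

lemma u_exists {n : ℕ} (P : Finset (Fin n × Fin n))
    (hPne : ∀ p ∈ P, p.1 ≠ p.2)
    (hPdisj : ∀ p ∈ P, ∀ q ∈ P, p ≠ q → p.1 ≠ q.1 ∧ p.1 ≠ q.2 ∧ p.2 ≠ q.1 ∧ p.2 ≠ q.2) :
    ∃ u : Fin n → ℝ, (∀ q ∈ P, u q.1 = 1) ∧ (∀ q ∈ P, u q.2 = -1) ∧ (∀ i, |u i| ≤ 1) ∧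
      (∀ v : Fin n → ℝ, ∑ i, u i * v i = ∑ p ∈ P, (v p.1 - v p.2)) := by
  set u : Fin n → ℝ :=
    fun i => ∑ p ∈ P, ((if i = p.1 then (1:ℝ) else 0) - (if i = p.2 then (1:ℝ) else 0)) with hu
  refine ⟨u, ?_, ?_, ?_, ?_⟩
  · intro q hq
    simp only [hu]
    rw [Finset.sum_eq_single q]
    · have := hPne q hq
      simp [this]
    · intro p hp hpq
      have hd := hPdisj q hq p hp (Ne.symm hpq)
      simp [hd.1, hd.2.1]
    · intro h; exact absurd hq h
  · intro q hq
    simp only [hu]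
    rw [Finset.sum_eq_single q]
    · have := hPne q hq
      simp [this.symm, (Ne.symm this)]
    · intro p hp hpq
      have hd := hPdisj q hq p hp (Ne.symm hpq)
      simp [hd.2.2.1, hd.2.2.2]
    · intro h; exact absurd hq h
  · intro i
    by_cases h1 : ∃ q ∈ P, i = q.1
    · obtain ⟨q, hq, rfl⟩ := h1
      simp only [hu]
      rw [Finset.sum_eq_single q]
      · have := hPne q hq
        simp [this]
      · intro p hp hpq
        have hd := hPdisj q hq p hp (Ne.symm hpq)
        simp [hd.1, hd.2.1]
      · intro h; exact absurd hq h
    · by_cases h2 : ∃ q ∈ P, i = q.2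
      · obtain ⟨q, hq, rfl⟩ := h2
        simp only [hu]
        rw [Finset.sum_eq_single q]
        · have := hPne q hq
          simp [this.symm, (Ne.symm this)]
        · intro p hp hpq
          have hd := hPdisj q hq p hp (Ne.symm hpq)
          simp [hd.2.2.1, hd.2.2.2]
        · intro h; exact absurd hq h
      · push_neg at h1 h2
        have : u i = 0 := by
          simp only [hu]
          apply Finset.sum_eq_zero
          intro p hp
          simp [h1 p hp, h2 p hp]
        rw [this]; norm_num
  · intro v
    have hterm : ∀ i, u i * v i =
        ∑ p ∈ P, ((if i = p.1 then v i else 0) - (if i = p.2 then v i else 0)) := by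
      intro i
      simp only [hu]
      rw [Finset.sum_mul]
      apply Finset.sum_congr rfl
      intro p _
      split_ifs <;> ring
    rw [Finset.sum_congr rfl fun i _ => hterm i, Finset.sum_comm]
    apply Finset.sum_congr rfl
    intro p hp
    rw [Finset.sum_sub_distrib]
    congr 1
    · rw [Finset.sum_ite_eq' Finset.univ p.1 v]
      simp
    · rw [Finset.sum_ite_eq' Finset.univ p.2 v]
      simp

lemma cut_bound {n : ℕ} (m : ℝ) (hm : 0 < m) (hn : 0 < n)
    (W : Matrix (Fin n) (Fin n) ℝ) (pv u : Fin n → ℝ) (P : Finset (Fin n × Fin n))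
    (hpv : ∀ i, pv i = 1 / (n : ℝ))
    (hufst : ∀ q ∈ P, u q.1 = 1) (husnd : ∀ q ∈ P, u q.2 = -1)
    (hPdisj : ∀ p ∈ P, ∀ q ∈ P, p ≠ q → p.1 ≠ q.1 ∧ p.1 ≠ q.2 ∧ p.2 ≠ q.1 ∧ p.2 ≠ q.2)
    (hn4R : n ≤ 4 * P.card) :
    m / 16 ≤ |∑ i ∈ P.image Prod.fst, ∑ j ∈ P.image Prod.snd,
      (W i j - Matrix.of (fun i j => W i j - m * (u i * u j)) i j) * pv i * pv j| := by
  have hnR : (0:ℝ) < n := by exact_mod_cast hn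
  have hn0 : (n:ℝ) ≠ 0 := ne_of_gt hnR
  have hfstinj : (P : Set (Fin n × Fin n)).InjOn Prod.fst := by
    intro p hp q hq hpq
    by_contra hne
    exact (hPdisj p hp q hq hne).1 hpq
  have hsndinj : (P : Set (Fin n × Fin n)).InjOn Prod.snd := by
    intro p hp q hq hpq
    by_contra hne
    exact (hPdisj p hp q hq hne).2.2.2 hpq
  have hcard1 : (P.image Prod.fst).card = P.card := Finset.card_image_of_injOn hfstinj
  have hcard2 : (P.image Prod.snd).card = P.card := Finset.card_image_of_injOn hsndinj
  have hterm : ∀ i ∈ P.image Prod.fst, ∀ j ∈ P.image Prod.snd,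
      (W i j - Matrix.of (fun i j => W i j - m * (u i * u j)) i j) * pv i * pv j
      = -(m / ((n:ℝ) * n)) := by
    intro i hi j hj
    obtain ⟨p, hp, rfl⟩ := Finset.mem_image.1 hi
    obtain ⟨q, hq, rfl⟩ := Finset.mem_image.1 hj
    rw [hpv, hpv]
    simp only [Matrix.of_apply]
    rw [hufst p hp, husnd q hq]
    field_simp; ring
  have hval : ∑ i ∈ P.image Prod.fst, ∑ j ∈ P.image Prod.snd,
      (W i j - Matrix.of (fun i j => W i j - m * (u i * u j)) i j) * pv i * pv j
      = -((P.card : ℝ) * (P.card : ℝ) * (m / ((n:ℝ) * n))) := by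
    rw [Finset.sum_congr rfl (fun i hi => Finset.sum_congr rfl (fun j hj => hterm i hi j hj))]
    rw [Finset.sum_const, Finset.sum_const, hcard1, hcard2]
    simp only [nsmul_eq_mul]
    ring
  rw [hval, abs_neg, abs_of_nonneg (by positivity)]
  have hRn : (n : ℝ) ≤ 4 * P.card := by exact_mod_cast hn4R
  have h1 : (0:ℝ) < (n:ℝ) * n := by positivity
  rw [div_le_iff₀ (by norm_num : (0:ℝ) < 16)]
  have hre2 : (P.card:ℝ) * (P.card:ℝ) * (m / ((n:ℝ) * n)) * 16
      = ((P.card:ℝ) * (P.card:ℝ) * m * 16) / ((n:ℝ) * n) := by ring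
  rw [hre2, le_div_iff₀ h1]
  have h2 : (n:ℝ) * n ≤ (4 * P.card) * (4 * P.card) :=
    mul_le_mul hRn hRn hnR.le (by positivity)
  nlinarith [hm.le]

lemma horth_lemma {n K : ℕ} (T M η δ : ℝ) (hT : 0 < T) (hM : 0 < M) (hη : 0 < η)
    (hδ : δ = η / 2) (hK : 0 < K) (hKη : M * T / K ≤ δ) (hn : 0 < n)
    (z : ℝ → Fin n → ℝ) (u : Fin n → ℝ) (P : Finset (Fin n × Fin n))
    (huvz : ∀ v : Fin n → ℝ, ∑ i, u i * v i = ∑ p ∈ P, (v p.1 - v p.2))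
    (hpair : ∀ p ∈ P, ∀ k : ℕ, k ≤ K → |z ((k:ℝ) * T / K) p.1 - z ((k:ℝ) * T / K) p.2| < δ)
    (hlip : ∀ i, ∀ s₁ ∈ Set.Ici (0:ℝ), ∀ s₂ ∈ Set.Ici (0:ℝ),
      |z s₂ i - z s₁ i| ≤ M * |s₂ - s₁|)
    (h2Rn : 2 * P.card ≤ n) :
    ∀ s ∈ Set.Icc (0:ℝ) T, |∑ i, u i * z s i| ≤ η * n := by
  intro s hs
  have hδpos : 0 < δ := by rw [hδ]; positivity
  set k : ℕ := ⌊s * K / T⌋₊ with hkdef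
  have hsKT : 0 ≤ s * K / T := by
    have := hs.1; positivity
  have hkK : k ≤ K := by
    have h1 : s * K / T ≤ K := by
      rw [div_le_iff₀ hT]
      have := hs.2
      nlinarith [Nat.cast_nonneg (α := ℝ) K]
    calc k ≤ ⌊(K:ℝ)⌋₊ := Nat.floor_le_floor h1
      _ = K := Nat.floor_natCast K
  set τ : ℝ := (k:ℝ) * T / K with hτ
  have hτnonneg : 0 ≤ τ := by rw [hτ]; positivity
  have hτks : τ ≤ s := by
    rw [hτ, div_le_iff₀ (by positivity : (0:ℝ) < K)]
    have h1 : (k:ℝ) ≤ s * K / T := Nat.floor_le hsKT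
    rw [le_div_iff₀ hT] at h1
    linarith
  have hsτk : s - τ ≤ T / K := by
    have h2 : s * K / T < (k:ℝ) + 1 := Nat.lt_floor_add_one _
    rw [div_lt_iff₀ hT] at h2
    rw [hτ, sub_le_iff_le_add]
    have he : T / (K:ℝ) + (k:ℝ) * T / (K:ℝ) = ((k:ℝ) + 1) * T / (K:ℝ) := by ring
    rw [he, le_div_iff₀ (by positivity : (0:ℝ) < K)]
    nlinarith
  have pairclose2 : ∀ p ∈ P, |z s p.1 - z s p.2| ≤ 3 * δ := by
    intro p hp
    have l1 := hlip p.1 τ (Set.mem_Ici.2 hτnonneg) s (Set.mem_Ici.2 hs.1)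
    have l2 := hlip p.2 τ (Set.mem_Ici.2 hτnonneg) s (Set.mem_Ici.2 hs.1)
    have habs : |s - τ| ≤ T / K := by
      rw [abs_of_nonneg (by linarith)]
      exact hsτk
    have hMTK : M * (T / K) ≤ δ := by
      have he : M * (T / K) = M * T / K := by ring
      rw [he]; exact hKη
    have hc1 : |z s p.1 - z τ p.1| ≤ δ := by
      calc |z s p.1 - z τ p.1| ≤ M * |s - τ| := l1
        _ ≤ M * (T / K) := by apply mul_le_mul_of_nonneg_left habs hM.le
        _ ≤ δ := hMTK
    have hc2 : |z s p.2 - z τ p.2| ≤ δ := by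
      calc |z s p.2 - z τ p.2| ≤ M * |s - τ| := l2
        _ ≤ M * (T / K) := by apply mul_le_mul_of_nonneg_left habs hM.le
        _ ≤ δ := hMTK
    have hpc := hpair p hp k hkK
    calc |z s p.1 - z s p.2|
        = |(z τ p.1 - z τ p.2) + ((z s p.1 - z τ p.1) - (z s p.2 - z τ p.2))| := by
          ring_nf
      _ ≤ |z τ p.1 - z τ p.2| + |(z s p.1 - z τ p.1) - (z s p.2 - z τ p.2)| :=
          abs_add_le _ _
      _ ≤ |z τ p.1 - z τ p.2| + (|z s p.1 - z τ p.1| + |z s p.2 - z τ p.2|) := by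
          have h := abs_sub (z s p.1 - z τ p.1) (z s p.2 - z τ p.2)
          linarith
      _ ≤ 3 * δ := by linarith
  have hnR : (0:ℝ) < n := by exact_mod_cast hn
  calc |∑ i, u i * z s i| = |∑ p ∈ P, (z s p.1 - z s p.2)| := by rw [huvz]
    _ ≤ ∑ p ∈ P, |z s p.1 - z s p.2| := Finset.abs_sum_le_sum_abs _ _
    _ ≤ ∑ _p ∈ P, 3 * δ := Finset.sum_le_sum pairclose2
    _ = P.card * (3 * δ) := by rw [Finset.sum_const, nsmul_eq_mul]
    _ ≤ (n / 2) * (3 * δ) := by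
        have h1 : (P.card : ℝ) ≤ n / 2 := by
          have h2 : (2 * P.card : ℝ) ≤ n := by exact_mod_cast h2Rn
          linarith
        apply mul_le_mul_of_nonneg_right h1 (by positivity)
    _ ≤ η * n := by
        rw [hδ]
        nlinarith [hnR, hη]

lemma two_card_le {n : ℕ} (P : Finset (Fin n × Fin n))
    (hPne : ∀ p ∈ P, p.1 ≠ p.2)
    (hPdisj : ∀ p ∈ P, ∀ q ∈ P, p ≠ q → p.1 ≠ q.1 ∧ p.1 ≠ q.2 ∧ p.2 ≠ q.1 ∧ p.2 ≠ q.2) :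
    2 * P.card ≤ n := by
  have hdisjSS : Disjoint (P.image Prod.fst) (P.image Prod.snd) := by
    rw [Finset.disjoint_left]
    intro i hi hi2
    obtain ⟨p, hp, rfl⟩ := Finset.mem_image.1 hi
    obtain ⟨q, hq, hq2⟩ := Finset.mem_image.1 hi2
    by_cases hpq : q = p
    · subst hpq
      exact hPne q hq hq2.symm
    · exact (hPdisj q hq p hp hpq).2.2.1 hq2
  have hfstinj : (P : Set (Fin n × Fin n)).InjOn Prod.fst := by
    intro p hp q hq hpq
    by_contra hne
    exact (hPdisj p hp q hq hne).1 hpq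
  have hsndinj : (P : Set (Fin n × Fin n)).InjOn Prod.snd := by
    intro p hp q hq hpq
    by_contra hne
    exact (hPdisj p hp q hq hne).2.2.2 hpq
  have h := Finset.card_le_card (Finset.subset_univ
    ((P.image Prod.fst) ∪ (P.image Prod.snd)))
  rw [Finset.card_union_of_disjoint hdisjSS, Finset.card_image_of_injOn hfstinj,
    Finset.card_image_of_injOn hsndinj, Finset.card_univ, Fintype.card_fin] at h
  omega


/-- Reconstruction is ill-conditioned for large networks: for every `ε > 0` there is
`n₀` such that for all `n ≥ n₀` and all SIS parameters with `m ≤ w_{ij} ≤ M`,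
`m ≤ z_i(0) ≤ 1−m`, `0 ≤ γ_i ≤ M` and `π_i = 1/n`, there is a symmetric `Ŵ` with
entries in `[0, 2M]` whose cut distance from `W` is at least `m/16 > 0`
(witnessed by sets `S, S'`), while the trajectories satisfy
`sup_{0 ≤ t ≤ T} ‖z(t) − ẑ(t)‖_{1,π} < ε`. -/
theorem stmt_11 (m M T : ℝ) (hm : 0 < m) (hm2 : m ≤ 1 / 2) (hmM : m ≤ M)
    (hT : 0 < T) :
    ∀ ε > (0 : ℝ), ∃ n₀ : ℕ, ∀ n : ℕ, n₀ ≤ n →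
      ∀ (W : Matrix (Fin n) (Fin n) ℝ) (pv γ : Fin n → ℝ) (z : ℝ → Fin n → ℝ),
        W.IsSymm → (∀ i j, W i j ∈ Set.Icc m M) →
        (∀ i, pv i = 1 / (n : ℝ)) →
        (∀ i, γ i ∈ Set.Icc (0 : ℝ) M) →
        (∀ i, z 0 i ∈ Set.Icc m (1 - m)) →
        (∀ i, ∀ t ∈ Set.Ici (0 : ℝ), HasDerivWithinAt (fun s => z s i)
          ((1 - z t i) * (∑ j, W i j * pv j * z t j) - γ i * z t i) (Set.Ici 0) t) →
        (∀ t ∈ Set.Ici (0 : ℝ), ∀ i, z t i ∈ Set.Icc (0 : ℝ) 1) →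
        ∃ W' : Matrix (Fin n) (Fin n) ℝ, W'.IsSymm ∧
          (∀ i j, W' i j ∈ Set.Icc (0 : ℝ) (2 * M)) ∧
          (∃ S S' : Finset (Fin n),
            m / 16 ≤ |∑ i ∈ S, ∑ j ∈ S', (W i j - W' i j) * pv i * pv j|) ∧
          0 < m / 16 ∧
          ∀ z' : ℝ → Fin n → ℝ,
            z' 0 = z 0 →
            (∀ i, ∀ t ∈ Set.Ici (0 : ℝ), HasDerivWithinAt (fun s => z' s i)
              ((1 - z' t i) * (∑ j, W' i j * pv j * z' t j) - γ i * z' t i)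
              (Set.Ici 0) t) →
            (∀ t ∈ Set.Ici (0 : ℝ), ∀ i, z' t i ∈ Set.Icc (0 : ℝ) 1) →
            ∀ t ∈ Set.Icc (0 : ℝ) T, ∑ i, |z t i - z' t i| * pv i < ε := by
  intro ε hε
  have hM : 0 < M := lt_of_lt_of_le hm hmM
  set c : ℝ := m * T * Real.exp (4 * M * T) with hc
  have hcpos : 0 < c := by positivity
  set η : ℝ := ε / (1 + c) with hηdef
  have hηpos : 0 < η := by positivity
  set δ : ℝ := η / 2 with hδdef
  have hδpos : 0 < δ := by positivity
  set B : ℕ := ⌊1 / δ⌋₊ + 1 with hB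
  set K : ℕ := ⌈2 * M * T / η⌉₊ with hK
  have hKpos : 0 < K := Nat.ceil_pos.2 (by positivity)
  have hKreal : 2 * M * T / η ≤ K := Nat.le_ceil _
  have hKη : M * T / K ≤ δ := by
    rw [div_le_iff₀ (by positivity : (0:ℝ) < K)]
    have h1 : 2 * M * T ≤ η * K := by
      rw [div_le_iff₀ hηpos] at hKreal; linarith [hKreal]
    rw [hδdef]; nlinarith
  refine ⟨2 * B ^ (K + 1), ?_⟩
  intro n hn W pv γ z hsym hW hpv hγ hz0 hode hbox
  have hBpos : 0 < B := Nat.succ_pos _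
  have hnpos : 0 < n := lt_of_lt_of_le (by positivity) hn
  have hnR : (0:ℝ) < n := by exact_mod_cast hnpos
  -- grid times
  set τ : ℕ → ℝ := fun k => k * T / K with hτ
  have hτnonneg : ∀ k : ℕ, 0 ≤ τ k := fun k => by positivity
  -- keys
  have keybound : ∀ (i : Fin n) (k : Fin (K + 1)), ⌊z (τ k) i / δ⌋₊ < B := by
    intro i k
    have hz := hbox (τ k) (hτnonneg k) i
    have h1 : ⌊z (τ k) i / δ⌋₊ ≤ ⌊1 / δ⌋₊ := by
      apply Nat.floor_le_floor
      gcongr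
      exact hz.2
    omega
  set key : Fin n → (Fin (K + 1) → Fin B) :=
    fun i k => ⟨⌊z (τ k) i / δ⌋₊, keybound i k⟩ with hkey
  obtain ⟨P, hPmem, hPdisj, hPcard⟩ := pairing_aux key (Finset.univ.card) Finset.univ rfl
  rw [Finset.card_univ, Fintype.card_fin] at hPcard
  have hCκ : Fintype.card (Fin (K + 1) → Fin B) = B ^ (K + 1) := by
    simp [Fintype.card_fun]
  rw [hCκ] at hPcard
  have hn4R : n ≤ 4 * P.card := by omega
  have hPne : ∀ p ∈ P, p.1 ≠ p.2 := fun p hp => (hPmem p hp).2.2.2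
  obtain ⟨u, hufst, husnd, huabs, huvz⟩ := u_exists P hPne hPdisj
  refine ⟨Matrix.of (fun i j => W i j - m * (u i * u j)), ?_, ?_, ?_, by positivity, ?_⟩
  · -- symmetry
    ext i j
    simp only [Matrix.transpose_apply, Matrix.of_apply]
    have hWsym : W j i = W i j := by
      have := congrFun (congrFun hsym i) j
      simpa [Matrix.transpose_apply] using this
    rw [hWsym]; ring
  · -- entries
    intro i j
    have h1 := huabs i
    have h2 := huabs j
    have h3 : |u i * u j| ≤ 1 := by
      rw [abs_mul]
      exact mul_le_one₀ h1 (abs_nonneg _) h2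
    have h4 := abs_le.1 h3
    have h5 := hW i j
    simp only [Matrix.of_apply, Set.mem_Icc]
    constructor
    · nlinarith [h5.1, h4.2]
    · nlinarith [h5.2, h4.1]
  · exact ⟨P.image Prod.fst, P.image Prod.snd,
      cut_bound m hm hnpos W pv u P hpv hufst husnd hPdisj hn4R⟩
  · -- trajectories stay close
    intro z' hz'0 hode' hbox' t ht
    have hlip : ∀ i, ∀ s₁ ∈ Set.Ici (0:ℝ), ∀ s₂ ∈ Set.Ici (0:ℝ),
        |z s₂ i - z s₁ i| ≤ M * |s₂ - s₁| :=
      traj_lipschitz M hM hnpos W pv γ z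
        (fun i j => ⟨le_trans hm.le (hW i j).1, (hW i j).2⟩) hpv hγ hode hbox
    have hpair : ∀ p ∈ P, ∀ k : ℕ, k ≤ K →
        |z ((k:ℝ) * T / K) p.1 - z ((k:ℝ) * T / K) p.2| < δ := by
      intro p hp k hk
      have hkeq := (hPmem p hp).2.2.1
      have hkk := congrFun hkeq (⟨k, by omega⟩ : Fin (K + 1))
      simp only [hkey, Fin.mk.injEq] at hkk
      exact floor_div_close hδpos (hbox (τ k) (hτnonneg k) p.1).1
        (hbox (τ k) (hτnonneg k) p.2).1 hkk
    have horth := horth_lemma T M η δ hT hM hηpos hδdef hKpos hKη hnpos z u P huvz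
      hpair hlip (two_card_le P hPne hPdisj)
    simp only [Matrix.of_apply] at hode'
    have hclose := gronwall_traj m M T η hm hmM hT hηpos hnpos W pv γ u z z'
      hW hpv hγ huabs horth hode hbox hz'0 hode' hbox' t ht
    have hcη : m * T * Real.exp (4*M*T) * η < ε := by
      have h1c : (0:ℝ) < 1 + c := by linarith
      calc m * T * Real.exp (4*M*T) * η = ε * (c / (1 + c)) := by
            rw [← hc, hηdef]; ring
        _ < ε * 1 := by
            apply mul_lt_mul_of_pos_left _ hε
            rw [div_lt_one h1c]; linarith
        _ = ε := mul_one ε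
    calc ∑ i, |z t i - z' t i| * pv i
        ≤ ∑ _i : Fin n, (m * T * Real.exp (4*M*T) * η) * (1/(n:ℝ)) := by
          apply Finset.sum_le_sum
          intro i _
          rw [hpv]
          exact mul_le_mul_of_nonneg_right (hclose i) (by positivity)
      _ = m * T * Real.exp (4*M*T) * η := by
          rw [Finset.sum_const, Finset.card_univ, Fintype.card_fin, nsmul_eq_mul]
          field_simp
      _ < ε := hcη
end

section
/- Fix M > 0 and 0 < T₀ ≤ T. For every ε > 0 there exists δ > 0 such that for every n ∈ ℕ⁺, every choice of SIS parameters p = (W, z(0), γ, π) with W symmetric with entries in [0,M], z(0) ∈ [0,1]ⁿ, γ with entries in [0,M], π nonnegative with Σ_i π_i = 1, and every symmetric matrix Ŵ with entries in [0,M]: if H_{2,T₀} < δ then H_{2,T} < ε. (δ depends only on ε, M, T₀, T, not on n or p.) -/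
open Set Finset

namespace SIS12

noncomputable section

local notation "S" => Set.Ioi (0:ℝ)

lemma hsU : UniqueDiffOn ℝ S := isOpen_Ioi.uniqueDiffOn

/-- smoothness on `(0,∞)` to every finite order -/
def Sm (f : ℝ → ℝ) : Prop := ∀ k : ℕ, ContDiffOn ℝ k f S

/-- derivative bounds -/
def Bd (C R : ℝ) (f : ℝ → ℝ) : Prop :=
  ∀ (k : ℕ), ∀ t ∈ S, |iteratedDerivWithin k f S t| ≤ C * (k.factorial : ℝ) * R ^ k

lemma Sm.deriv {f : ℝ → ℝ} (hf : Sm f) : Sm (derivWithin f S) := by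
  intro k
  have h : ContDiffOn ℝ ((k : WithTop ℕ∞) + 1) f S := by exact_mod_cast hf (k+1)
  exact ((contDiffOn_succ_iff_derivWithin hsU).1 h).2.2

lemma iter_succ' {f : ℝ → ℝ} {x : ℝ} (hx : x ∈ S) (k : ℕ) :
    iteratedDerivWithin (k+1) f S x = iteratedDerivWithin k (derivWithin f S) S x :=
  congrFun iteratedDerivWithin_succ' x

lemma Sm.iter {f : ℝ → ℝ} (hf : Sm f) : ∀ (k : ℕ), Sm (iteratedDerivWithin k f S) := by
  intro k
  induction k generalizing f with
  | zero => simpa [iteratedDerivWithin_zero] using hf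
  | succ k IH =>
    intro j
    exact ContDiffOn.congr (IH hf.deriv j) (fun x hx => iter_succ' hx k)

lemma iter_iter {f : ℝ → ℝ} (hf : Sm f) (j : ℕ) : ∀ (k : ℕ), ∀ x ∈ S,
    iteratedDerivWithin j (iteratedDerivWithin k f S) S x
      = iteratedDerivWithin (j + k) f S x := by
  intro k
  induction k generalizing f with
  | zero => intro x hx; simp
  | succ k IH =>
    intro x hx
    have e1 : Set.EqOn (iteratedDerivWithin (k+1) f S)
        (iteratedDerivWithin k (derivWithin f S) S) S := fun y hy => iter_succ' hy k
    calc iteratedDerivWithin j (iteratedDerivWithin (k+1) f S) S x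
        = iteratedDerivWithin j (iteratedDerivWithin k (derivWithin f S) S) S x :=
          iteratedDerivWithin_congr e1 hx
      _ = iteratedDerivWithin (j + k) (derivWithin f S) S x := IH hf.deriv x hx
      _ = iteratedDerivWithin ((j + k) + 1) f S x := (iter_succ' hx (j+k)).symm
      _ = iteratedDerivWithin (j + (k + 1)) f S x := by ring_nf
        
lemma Sm.hasDerivAt {f : ℝ → ℝ} (hf : Sm f) (k : ℕ) {t : ℝ} (ht : t ∈ S) :
    HasDerivAt (iteratedDerivWithin k f S) (iteratedDerivWithin (k+1) f S t) t := by
  have hd : DifferentiableOn ℝ (iteratedDerivWithin k f S) S := by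
    refine (hf (k+1)).differentiableOn_iteratedDerivWithin ?_ hsU
    exact_mod_cast Nat.lt_succ_self k
  have hda : DifferentiableAt ℝ (iteratedDerivWithin k f S) t :=
    (hd t ht).differentiableAt (isOpen_Ioi.mem_nhds ht)
  have h2 : iteratedDerivWithin (k+1) f S t = _root_.deriv (iteratedDerivWithin k f S) t := by
    rw [iteratedDerivWithin_succ, derivWithin_of_isOpen isOpen_Ioi ht]
  rw [h2]
  exact hda.hasDerivAt


lemma pow_term_deriv (A b : ℝ) (k : ℕ) (y : ℝ) :
    HasDerivAt (fun y => A * (y-b)^(k+1) / ((k+1).factorial : ℝ))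
      (A * (y-b)^k / (k.factorial : ℝ)) y := by
  have h1 : HasDerivAt (fun y : ℝ => y - b) 1 y := (hasDerivAt_id y).sub_const b
  have h2 := h1.pow (k+1)
  have h3 := h2.const_mul (A / ((k+1).factorial : ℝ))
  have efun : (fun y => A / ((k+1).factorial : ℝ) * (y-b)^(k+1))
      = fun y => A * (y-b)^(k+1) / ((k+1).factorial : ℝ) := by
    funext y; ring
  simp only [Pi.pow_apply] at h3
  rw [efun] at h3
  refine h3.congr_deriv ?_
  have hfac : ((k+1).factorial : ℝ) = (k+1) * (k.factorial : ℝ) := by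
    rw [Nat.factorial_succ]; push_cast; ring
  have hkfac : (k.factorial : ℝ) ≠ 0 := Nat.cast_ne_zero.2 k.factorial_ne_zero
  simp only [Nat.add_sub_cancel, mul_one]
  rw [hfac]
  push_cast
  field_simp

lemma taylor_bd : ∀ (N : ℕ) (f : ℝ → ℝ), Sm f → ∀ (D b x : ℝ), 0 < b → b ≤ x →
    (∀ t ∈ Set.Icc b x, |iteratedDerivWithin (N+1) f S t| ≤ D) →
    |f x - ∑ k ∈ Finset.range (N+1),
        iteratedDerivWithin k f S b * (x-b)^k / (k.factorial : ℝ)| ≤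
      D * (x-b)^(N+1) / ((N+1).factorial : ℝ) := by
  intro N
  induction N with
  | zero =>
    intro f hf D b x hb hbx hD
    have hsub : Set.Icc b x ⊆ S := fun t ht => lt_of_lt_of_le hb ht.1
    have hc : ContinuousOn f (Set.Icc b x) := ((hf 0).continuousOn).mono hsub
    have hd : ∀ t ∈ Set.Ico b x, HasDerivWithinAt f (iteratedDerivWithin 1 f S t) (Set.Ici t) t := by
      intro t ht
      have htS : t ∈ S := lt_of_lt_of_le hb ht.1
      have := (hf.hasDerivAt 0 htS).hasDerivWithinAt (s := Set.Ici t)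
      simpa using this
    have hbound : ∀ t ∈ Set.Ico b x, ‖iteratedDerivWithin 1 f S t‖ ≤ D := by
      intro t ht
      simpa [Real.norm_eq_abs] using hD t ⟨ht.1, le_of_lt ht.2⟩
    have := norm_image_sub_le_of_norm_deriv_right_le_segment hc hd hbound x
      (right_mem_Icc.2 hbx)
    simpa [Finset.sum_range_one, Real.norm_eq_abs] using this
  | succ N IH =>
    intro f hf D b x hb hbx hD
    have hbS : b ∈ S := hb
    set g := derivWithin f S with hgdef
    have hgsm : Sm g := hf.deriv
    have hiterg : ∀ (k:ℕ), ∀ t ∈ S, iteratedDerivWithin (k+1) f S t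
        = iteratedDerivWithin k g S t := fun k t ht => iter_succ' ht k
    set c : ℕ → ℝ := fun k => iteratedDerivWithin k f S b with hcdef
    set P : ℝ → ℝ := fun y => ∑ k ∈ Finset.range (N+2), c k * (y-b)^k / (k.factorial:ℝ)
      with hPdef
    set P' : ℝ → ℝ := fun y => ∑ k ∈ Finset.range (N+1), c (k+1) * (y-b)^k / (k.factorial:ℝ)
      with hP'def
    have hterm : ∀ (k : ℕ) (y : ℝ), HasDerivAt
        (fun y => c (k+1) * (y-b)^(k+1) / ((k+1).factorial : ℝ))
        (c (k+1) * (y-b)^k / (k.factorial : ℝ)) y := fun k y => pow_term_deriv (c (k+1)) b k y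
    have hPDeriv : ∀ y, HasDerivAt P (P' y) y := by
      intro y
      have hQ : HasDerivAt (fun y => ∑ k ∈ Finset.range (N+1),
          c (k+1) * (y-b)^(k+1) / ((k+1).factorial : ℝ)) (P' y) y := by
        rw [hP'def]
        exact HasDerivAt.fun_sum (fun k _ => hterm k y)
      have ePQ : P = fun y => (∑ k ∈ Finset.range (N+1),
          c (k+1) * (y-b)^(k+1) / ((k+1).factorial : ℝ)) + c 0 := by
        funext y
        rw [hPdef]
        show (∑ k ∈ Finset.range (N+2), c k * (y-b)^k / (k.factorial:ℝ)) = _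
        rw [show N+2 = N+1+1 from rfl,
          Finset.sum_range_succ' (fun k => c k * (y-b)^k / (k.factorial:ℝ)) (N+1)]
        norm_num
      rw [ePQ]
      exact hQ.add_const (c 0)
    set B : ℝ → ℝ := fun y => D * (y-b)^(N+2) / ((N+2).factorial : ℝ) with hBdef
    set B' : ℝ → ℝ := fun y => D * (y-b)^(N+1) / ((N+1).factorial : ℝ) with hB'def
    have hBDeriv : ∀ y, HasDerivAt B (B' y) y := fun y => pow_term_deriv D b (N+1) y
    set φ : ℝ → ℝ := fun y => f y - P y with hφdef
    set φ' : ℝ → ℝ := fun y => iteratedDerivWithin 1 f S y - P' y with hφ'def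
    have hφc : ContinuousOn φ (Set.Icc b x) := by
      apply ContinuousOn.sub
      · exact ((hf 0).continuousOn).mono (fun t ht => lt_of_lt_of_le hb ht.1)
      · exact fun y _ => (hPDeriv y).continuousAt.continuousWithinAt
    have hφd : ∀ y ∈ Set.Ico b x, HasDerivWithinAt φ (φ' y) (Set.Ici y) y := by
      intro y hy
      have hyS : y ∈ S := lt_of_lt_of_le hb hy.1
      have h1 : HasDerivAt f (iteratedDerivWithin 1 f S y) y := by
        have := hf.hasDerivAt 0 hyS
        simpa using this
      exact ((h1.sub (hPDeriv y)).hasDerivWithinAt)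
    have hbound : ∀ y ∈ Set.Ico b x, ‖φ' y‖ ≤ B' y := by
      intro y hy
      have hyS : y ∈ S := lt_of_lt_of_le hb hy.1
      have h1 : iteratedDerivWithin 1 f S y = g y := by
        rw [iteratedDerivWithin_one]
      have h2 : ∀ k ∈ Finset.range (N+1), c (k+1) * (y-b)^k / (k.factorial : ℝ)
          = iteratedDerivWithin k g S b * (y-b)^k / (k.factorial : ℝ) := by
        intro k _
        rw [hcdef]
        simp only []
        rw [hiterg k b hbS]
      have hIH := IH g hgsm D b y hb hy.1 ?_
      · have : φ' y = g y - ∑ k ∈ Finset.range (N+1),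
            iteratedDerivWithin k g S b * (y-b)^k / (k.factorial : ℝ) := by
          rw [hφ'def]
          simp only [h1]
          congr 1
          exact Finset.sum_congr rfl h2
        rw [Real.norm_eq_abs, this]
        exact hIH
      · intro t ht
        have htS : t ∈ S := lt_of_lt_of_le hb ht.1
        rw [← hiterg (N+1) t htS]
        exact hD t ⟨ht.1, le_trans ht.2 (le_of_lt hy.2)⟩
    have hφb : ‖φ b‖ ≤ B b := by
      have hPb : P b = f b := by
        rw [hPdef]
        simp only []
        rw [Finset.sum_eq_single 0]
        · simp [hcdef]
        · intro k _ hk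
          have : (b - b : ℝ) = 0 := by ring
          rw [this, zero_pow hk]
          ring
        · intro h; exact absurd (Finset.mem_range.2 (Nat.succ_pos _)) h
      have : φ b = 0 := by rw [hφdef]; simp [hPb]
      rw [this, hBdef]
      simp
    have hB'nonneg : ∀ y ∈ Set.Ico b x, ‖φ' y‖ ≤ B' y := hbound
    have := image_norm_le_of_norm_deriv_right_le_deriv_boundary hφc hφd hφb hBDeriv hbound
      (right_mem_Icc.2 hbx)
    rw [Real.norm_eq_abs] at this
    calc |f x - ∑ k ∈ Finset.range (N+1+1),
        iteratedDerivWithin k f S b * (x-b)^k / (k.factorial : ℝ)| = |φ x| := rfl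
      _ ≤ B x := this
      _ = D * (x-b)^(N+1+1) / ((N+1+1).factorial : ℝ) := rfl
  

lemma derivsmall (C R ℓ : ℝ) (hC : 0 < C) (hR : 0 < R) (hℓ : 0 < ℓ) :
    ∀ (K : ℕ), ∀ ε > (0:ℝ), ∃ η > (0:ℝ), ∀ f, Sm f → Bd C R f → ∀ a > (0:ℝ),
      (∀ t ∈ Set.Icc a (a+ℓ), |f t| ≤ η) →
      ∀ j ≤ K, ∀ t ∈ Set.Icc a (a+ℓ), |iteratedDerivWithin j f S t| ≤ ε := by
  intro K
  induction K with
  | zero =>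
    intro ε hε
    refine ⟨ε, hε, fun f hf hbd a ha hsmall j hj t ht => ?_⟩
    interval_cases j
    simpa using hsmall t ht
  | succ K IH =>
    intro ε hε
    set D := C * (((K+2).factorial : ℕ) : ℝ) * R^(K+2) with hDdef
    have hD : 0 < D := by
      apply mul_pos (mul_pos hC _) (pow_pos hR _)
      exact_mod_cast Nat.factorial_pos _
    set h : ℝ := min (ℓ/2) (ε/(3*D)) with hhdef
    have hh : 0 < h := lt_min (by linarith) (by positivity)
    have hhℓ : h ≤ ℓ/2 := min_le_left _ _
    have hhε : h ≤ ε/(3*D) := min_le_right _ _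
    obtain ⟨η, hη, Hη⟩ := IH (min ε (ε*h/4)) (lt_min hε (by positivity))
    refine ⟨η, hη, ?_⟩
    intro f hf hbd a ha hsmall j hj t ht
    by_cases hjK : j ≤ K
    · exact le_trans (Hη f hf hbd a ha hsmall j hjK t ht) (min_le_left _ _)
    · have hj1 : j = K+1 := by omega
      subst hj1
      obtain ⟨ht1, ht2⟩ := ht
      have ht : t ∈ Set.Icc a (a+ℓ) := ⟨ht1, ht2⟩
      -- window geometry
      set p := min t (a + ℓ - h) with hpdef
      have haℓh : a ≤ a + ℓ - h := by linarith
      have hap : a ≤ p := le_min ht.1 haℓh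
      have hpt : p ≤ t := min_le_left _ _
      have hp0 : (0:ℝ) < p := lt_of_lt_of_le ha hap
      have hpS : p ∈ S := hp0
      have hphw : p + h ≤ a + ℓ := by
        have : p ≤ a + ℓ - h := min_le_right _ _
        linarith
      have htp : t ≤ p + h := by
        rcases le_total t (a + ℓ - h) with hc | hc
        · have : p = t := min_eq_left hc
          rw [this]; linarith
        · have : p = a + ℓ - h := min_eq_right hc
          rw [this]; linarith
      have hpw : p ∈ Set.Icc a (a+ℓ) := ⟨hap, le_trans hpt ht.2⟩
      have hphw' : p + h ∈ Set.Icc a (a+ℓ) := ⟨by linarith, hphw⟩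
      -- bound on |iter K f| on window
      have hβ : ∀ u ∈ Set.Icc a (a+ℓ), |iteratedDerivWithin K f S u| ≤ ε*h/4 := by
        intro u hu
        exact le_trans (Hη f hf hbd a ha hsmall K (le_refl K) u hu) (min_le_right _ _)
      -- (i) Taylor order 1 on gk := iter K f from p to p+h
      set gk := iteratedDerivWithin K f S with hgkdef
      have hDbound2 : ∀ u ∈ Set.Icc p (p+h), |iteratedDerivWithin 2 gk S u| ≤ D := by
        intro u hu
        have huS : u ∈ S := lt_of_lt_of_le hp0 hu.1
        rw [hgkdef, iter_iter hf 2 K u huS, show 2+K = K+2 by omega, hDdef]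
        exact hbd (K+2) u huS
      have htay1 := taylor_bd 1 gk (hf.iter K) D p (p+h) hp0 (by linarith) hDbound2
      have hkey1 : |gk (p+h) - (gk p + iteratedDerivWithin 1 gk S p * h)| ≤ D * h^2 / 2 := by
        have e2 : p + h - p = h := by ring
        rw [e2] at htay1
        have e1 : ∑ k ∈ Finset.range (1+1), iteratedDerivWithin k gk S p * h^k
            / (k.factorial : ℝ) = gk p + iteratedDerivWithin 1 gk S p * h := by
          rw [Finset.sum_range_succ, Finset.sum_range_one]
          norm_num
        rw [e1] at htay1
        have e3 : D * h^(1+1) / (((1+1).factorial : ℕ) : ℝ) = D * h^2 / 2 := by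
          norm_num [Nat.factorial]
        rw [e3] at htay1
        exact htay1
      have hiter1p : iteratedDerivWithin 1 gk S p = iteratedDerivWithin (K+1) f S p := by
        rw [hgkdef, iter_iter hf 1 K p hpS, show 1+K = K+1 by omega]
      have hi : |iteratedDerivWithin (K+1) f S p| * h ≤ 2*(ε*h/4) + D * h^2 / 2 := by
        have h1 := hβ (p+h) hphw'
        have h2 := hβ p hpw
        have h3 : |iteratedDerivWithin (K+1) f S p * h|
            ≤ |gk (p+h)| + |gk p| + D * h^2/2 := by
          rw [← hiter1p]
          have : iteratedDerivWithin 1 gk S p * h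
              = (gk p + iteratedDerivWithin 1 gk S p * h) - gk p := by ring
          rw [this]
          calc |(gk p + iteratedDerivWithin 1 gk S p * h) - gk p|
              ≤ |(gk p + iteratedDerivWithin 1 gk S p * h) - gk (p+h)| + |gk (p+h) - gk p| := by
                have := abs_sub_le (gk p + iteratedDerivWithin 1 gk S p * h) (gk (p+h)) (gk p)
                linarith
            _ ≤ D * h^2/2 + (|gk (p+h)| + |gk p|) := by
                have hx := hkey1
                rw [abs_sub_comm] at hx
                have := abs_sub (gk (p+h)) (gk p)
                have habs : |gk (p+h) - gk p| ≤ |gk (p+h)| + |gk p| := abs_sub _ _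
                linarith
            _ = |gk (p+h)| + |gk p| + D * h^2/2 := by ring
        rw [abs_mul, abs_of_pos hh] at h3
        have hgkp : |gk (p+h)| ≤ ε*h/4 := by rw [hgkdef]; exact h1
        have hgkp2 : |gk p| ≤ ε*h/4 := by rw [hgkdef]; exact h2
        linarith
      -- (ii) transfer from p to t
      have hDbound1 : ∀ u ∈ Set.Icc p t, |iteratedDerivWithin 1
          (iteratedDerivWithin (K+1) f S) S u| ≤ D := by
        intro u hu
        have huS : u ∈ S := lt_of_lt_of_le hp0 hu.1
        rw [iter_iter hf 1 (K+1) u huS, show 1+(K+1) = K+2 by omega]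
        have := hbd (K+2) u huS
        rw [hDdef]
        exact this
      have htay0 := taylor_bd 0 (iteratedDerivWithin (K+1) f S) (hf.iter (K+1)) D p t
        hp0 hpt hDbound1
      have hkey0 : |iteratedDerivWithin (K+1) f S t - iteratedDerivWithin (K+1) f S p|
          ≤ D * (t - p) := by
        have e1 : ∑ k ∈ Finset.range (0+1), iteratedDerivWithin k
            (iteratedDerivWithin (K+1) f S) S p * (t-p)^k / (k.factorial : ℝ)
            = iteratedDerivWithin (K+1) f S p := by
          rw [Finset.sum_range_one]
          norm_num
        rw [e1] at htay0
        norm_num at htay0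
        exact htay0
      -- combine
      have hfinal : |iteratedDerivWithin (K+1) f S t|
          ≤ |iteratedDerivWithin (K+1) f S p| + D * h := by
        have h1 : D * (t-p) ≤ D * h := by
          apply mul_le_mul_of_nonneg_left _ (le_of_lt hD)
          linarith
        have := abs_sub_abs_le_abs_sub (iteratedDerivWithin (K+1) f S t)
          (iteratedDerivWithin (K+1) f S p)
        linarith
      have hpbound : |iteratedDerivWithin (K+1) f S p| ≤ ε/2 + D*h/2 := by
        have := hi
        have h2 : |iteratedDerivWithin (K+1) f S p| ≤ (2*(ε*h/4) + D*h^2/2)/h := by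
          rw [le_div_iff₀ hh]
          exact this
        have h3 : (2*(ε*h/4) + D*h^2/2)/h = ε/2 + D*h/2 := by
          field_simp
          ring
        linarith [h3 ▸ h2]
      have hDh : D * h ≤ ε/3 := by
        calc D * h ≤ D * (ε/(3*D)) := mul_le_mul_of_nonneg_left hhε (le_of_lt hD)
          _ = ε/3 := by field_simp [ne_of_gt hD]
      linarith


lemma step_lemma (C R ℓ : ℝ) (hC : 0 < C) (hR : 0 < R) (hℓ : 0 < ℓ)
    (hℓs : ℓ ≤ 1/(2*R)) :
    ∀ ε > (0:ℝ), ∃ η, 0 < η ∧ η ≤ ε ∧ ∀ f, Sm f → Bd C R f → ∀ a > (0:ℝ),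
      (∀ t ∈ Set.Icc a (a+ℓ), |f t| ≤ η) →
      ∀ t ∈ Set.Icc a (a + ℓ/2 + 1/(2*R)), |f t| ≤ ε := by
  intro ε hε
  obtain ⟨N, hN⟩ := exists_pow_lt_of_lt_one (show (0:ℝ) < ε/(2*C) by positivity)
    (show (1:ℝ)/2 < 1 by norm_num)
  have hrem : C * (1/2:ℝ)^(N+1) < ε/2 := by
    have h1 : ((1:ℝ)/2)^(N+1) ≤ (1/2:ℝ)^N :=
      pow_le_pow_of_le_one (by norm_num) (by norm_num) (Nat.le_succ N)
    have h2 : C * (1/2:ℝ)^(N+1) ≤ C * (1/2:ℝ)^N :=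
      mul_le_mul_of_nonneg_left h1 (le_of_lt hC)
    have h3 : C * (1/2:ℝ)^N < C * (ε/(2*C)) := mul_lt_mul_of_pos_left hN hC
    have h4 : C * (ε/(2*C)) = ε/2 := by field_simp
    linarith
  set A := ∑ k ∈ Finset.range (N+1), (1/(2*R))^k / (k.factorial:ℝ) with hAdef
  have hA1 : 1 ≤ A := by
    have h0 : ((1:ℝ)/(2*R))^0 / ((Nat.factorial 0 : ℕ):ℝ) = 1 := by norm_num
    rw [hAdef]
    calc (1:ℝ) = (1/(2*R))^0 / ((Nat.factorial 0 : ℕ):ℝ) := h0.symm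
      _ ≤ _ := Finset.single_le_sum (f := fun k => (1/(2*R))^k / (k.factorial:ℝ))
          (fun k _ => by positivity) (Finset.mem_range.2 (Nat.succ_pos N))
  have hA0 : 0 < A := lt_of_lt_of_le one_pos hA1
  set ε2 := ε/(2*A) with hε2def
  have hε2 : 0 < ε2 := by positivity
  obtain ⟨η0, hη0, H0⟩ := derivsmall C R ℓ hC hR hℓ N ε2 hε2
  refine ⟨min η0 ε, lt_min hη0 hε, min_le_right _ _, ?_⟩
  intro f hf hbd a ha hsmall t htmem
  have hsmall0 : ∀ u ∈ Set.Icc a (a+ℓ), |f u| ≤ η0 :=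
    fun u hu => le_trans (hsmall u hu) (min_le_left _ _)
  by_cases hta : t ≤ a + ℓ
  · exact le_trans (hsmall t ⟨htmem.1, hta⟩) (min_le_right _ _)
  · push_neg at hta
    set b := a + ℓ/2 with hbdef
    have hb0 : 0 < b := by rw [hbdef]; linarith
    have hbt : b ≤ t := by rw [hbdef]; linarith
    have hDb : ∀ u ∈ Set.Icc b t, |iteratedDerivWithin (N+1) f S u|
        ≤ C * (((N+1).factorial : ℕ):ℝ) * R^(N+1) := by
      intro u hu
      exact hbd (N+1) u (lt_of_lt_of_le hb0 hu.1)
    have htay := taylor_bd N f hf _ b t hb0 hbt hDb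
    have hderivs := H0 f hf hbd a ha hsmall0
    have hbw : b ∈ Set.Icc a (a+ℓ) := ⟨by rw [hbdef]; linarith, by rw [hbdef]; linarith⟩
    have htb : t - b ≤ 1/(2*R) := by
      have := htmem.2
      rw [hbdef]; linarith
    have htb0 : (0:ℝ) ≤ t - b := by linarith
    have hsum : |∑ k ∈ Finset.range (N+1),
        iteratedDerivWithin k f S b * (t-b)^k / (k.factorial:ℝ)| ≤ ε/2 := by
      calc |∑ k ∈ Finset.range (N+1), iteratedDerivWithin k f S b * (t-b)^k / (k.factorial:ℝ)|
          ≤ ∑ k ∈ Finset.range (N+1),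
            |iteratedDerivWithin k f S b * (t-b)^k / (k.factorial:ℝ)| :=
            Finset.abs_sum_le_sum_abs _ _
        _ ≤ ∑ k ∈ Finset.range (N+1), ε2 * ((1/(2*R))^k / (k.factorial:ℝ)) := by
            apply Finset.sum_le_sum
            intro k hk
            have hkN : k ≤ N := Nat.lt_succ_iff.1 (Finset.mem_range.1 hk)
            have hc : |iteratedDerivWithin k f S b| ≤ ε2 := hderivs k hkN b hbw
            have hpow : (t-b)^k ≤ (1/(2*R))^k := pow_le_pow_left₀ htb0 htb k
            have hfac : (0:ℝ) < (k.factorial:ℝ) := by exact_mod_cast k.factorial_pos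
            rw [abs_div, abs_mul, abs_of_nonneg (pow_nonneg htb0 k),
              abs_of_pos hfac]
            have e : ε2 * ((1/(2*R))^k / (k.factorial:ℝ))
                = ε2 * (1/(2*R))^k / (k.factorial:ℝ) := by ring
            rw [e]
            gcongr <;> first
              | exact hc
              | exact hpow
              | positivity
        _ = ε2 * A := by rw [hAdef, Finset.mul_sum]
        _ = ε/2 := by rw [hε2def]; field_simp
    have hrem2 : C * (((N+1).factorial : ℕ):ℝ) * R^(N+1) * (t-b)^(N+1)
        / (((N+1).factorial : ℕ):ℝ) ≤ ε/2 := by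
      have hfac : (0:ℝ) < (((N+1).factorial : ℕ):ℝ) := by exact_mod_cast (N+1).factorial_pos
      have e1 : C * (((N+1).factorial : ℕ):ℝ) * R^(N+1) * (t-b)^(N+1)
          / (((N+1).factorial : ℕ):ℝ) = C * (R*(t-b))^(N+1) := by
        rw [mul_pow]; field_simp
      rw [e1]
      have h1 : R*(t-b) ≤ 1/2 := by
        calc R*(t-b) ≤ R*(1/(2*R)) := mul_le_mul_of_nonneg_left htb (le_of_lt hR)
          _ = 1/2 := by field_simp
      have h2 : (0:ℝ) ≤ R*(t-b) := mul_nonneg (le_of_lt hR) htb0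
      have h3 : (R*(t-b))^(N+1) ≤ (1/2:ℝ)^(N+1) := pow_le_pow_left₀ h2 h1 _
      have h4 : C * (R*(t-b))^(N+1) ≤ C * (1/2:ℝ)^(N+1) :=
        mul_le_mul_of_nonneg_left h3 (le_of_lt hC)
      linarith
    have := abs_sub_abs_le_abs_sub (f t) (∑ k ∈ Finset.range (N+1),
        iteratedDerivWithin k f S b * (t-b)^k / (k.factorial:ℝ))
    have habs : |f t| ≤ |f t - ∑ k ∈ Finset.range (N+1),
        iteratedDerivWithin k f S b * (t-b)^k / (k.factorial:ℝ)| + |∑ k ∈ Finset.range (N+1),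
        iteratedDerivWithin k f S b * (t-b)^k / (k.factorial:ℝ)| := by
      linarith
    linarith

lemma iter_lemma (C R ℓ : ℝ) (hC : 0 < C) (hR : 0 < R) (hℓ : 0 < ℓ)
    (hℓs : ℓ ≤ 1/(2*R)) :
    ∀ (m : ℕ), ∀ ε > (0:ℝ), ∃ η, 0 < η ∧ η ≤ ε ∧ ∀ f, Sm f → Bd C R f → ∀ a > (0:ℝ),
      (∀ t ∈ Set.Icc a (a+ℓ), |f t| ≤ η) →
      ∀ t ∈ Set.Icc a (a + ℓ + (m:ℝ) * (1/(4*R))), |f t| ≤ ε := by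
  intro m
  induction m with
  | zero =>
    intro ε hε
    refine ⟨ε, hε, le_refl ε, fun f hf hbd a ha hsmall t ht => ?_⟩
    apply hsmall t
    constructor
    · exact ht.1
    · have := ht.2
      push_cast at this
      linarith
  | succ m IH =>
    intro ε hε
    obtain ⟨η1, hη1, hη1ε, H1⟩ := IH ε hε
    obtain ⟨η, hη, hηη1, H⟩ := step_lemma C R ℓ hC hR hℓ hℓs η1 hη1
    refine ⟨η, hη, le_trans hηη1 hη1ε, ?_⟩
    intro f hf hbd a ha hsmall t ht
    have hstep := H f hf hbd a ha hsmall
    by_cases htc : t ≤ a + ℓ/2 + 1/(2*R)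
    · exact le_trans (hstep t ⟨ht.1, htc⟩) hη1ε
    · push_neg at htc
      have ha' : a + 1/(4*R) > 0 := by positivity
      have hsmall' : ∀ u ∈ Set.Icc (a + 1/(4*R)) (a + 1/(4*R) + ℓ), |f u| ≤ η1 := by
        intro u hu
        apply hstep u
        constructor
        · have h4R : (0:ℝ) < 1/(4*R) := by positivity
          linarith [hu.1]
        · have h1 : 1/(4*R) + ℓ ≤ ℓ/2 + 1/(2*R) := by
            have e1 : (1:ℝ)/(2*R) = 2 * (1/(4*R)) := by field_simp; ring
            rw [e1]
            have h4R : (0:ℝ) < 1/(4*R) := by positivity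
            linarith
          linarith [hu.2]
      have := H1 f hf hbd (a + 1/(4*R)) ha' hsmall' t ?_
      · exact this
      · constructor
        · have h1 : a + 1/(4*R) ≤ a + ℓ/2 + 1/(2*R) := by
            have e1 : (1:ℝ)/(2*R) = 2 * (1/(4*R)) := by field_simp; ring
            rw [e1]
            have h4R : (0:ℝ) < 1/(4*R) := by positivity
            linarith
          linarith
        · have := ht.2
          push_cast at this ⊢
          linarith


lemma initial_bound (L ℓ T₀ : ℝ) (hL : 0 < L) (hℓ : 0 < ℓ) (h2ℓ : 2*ℓ ≤ T₀) :
    ∀ η > (0:ℝ), ∃ δ > (0:ℝ), ∀ f : ℝ → ℝ, ContinuousOn f (Set.Icc 0 T₀) →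
      (∀ t ∈ Set.Icc (0:ℝ) T₀, 0 ≤ f t) →
      (∀ p t : ℝ, 0 ≤ p → p ≤ t → t ≤ T₀ → |f t - f p| ≤ L * (t - p)) →
      (∫ t in (0:ℝ)..T₀, f t) < δ^2 →
      ∀ t ∈ Set.Icc (T₀ - ℓ) T₀, f t ≤ η := by
  intro η hη
  have hT₀ : 0 < T₀ := by linarith
  refine ⟨Real.sqrt (min (ℓ*η/2) (η^2/(2*L))), Real.sqrt_pos.2 (by positivity), ?_⟩
  intro f hfc hfnn hlip hint t ht
  by_contra hcon
  push_neg at hcon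
  set F := f t with hFdef
  have hF : 0 < F := lt_trans hη hcon
  set w := min ℓ (F/L) with hwdef
  have hw0 : 0 < w := lt_min hℓ (by positivity)
  have hwℓ : w ≤ ℓ := min_le_left _ _
  have hwFL : w ≤ F/L := min_le_right _ _
  have htw0 : 0 ≤ t - w := by
    have := ht.1
    linarith
  have hnn : ∀ u ∈ Set.Icc (t-w) t, (0:ℝ) ≤ f u := by
    intro u hu
    exact hfnn u ⟨by linarith [hu.1], le_trans hu.2 ht.2⟩
  -- pointwise lower bound
  have hlb : ∀ u ∈ Set.Icc (t-w) t, F - L*(t-u) ≤ f u := by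
    intro u hu
    have h1 := hlip u t (by linarith [hu.1]) hu.2 ht.2
    have h2 : f t - f u ≤ L * (t - u) := le_trans (le_abs_self _) h1
    linarith
  -- integrability
  have hfint : IntervalIntegrable f MeasureTheory.volume (t-w) t := by
    apply ContinuousOn.intervalIntegrable
    apply hfc.mono
    rw [Set.uIcc_of_le (by linarith)]
    intro u hu
    exact ⟨by linarith [hu.1], le_trans hu.2 ht.2⟩
  have hcont1 : Continuous (fun u : ℝ => F - L*(t-u)) := by fun_prop
  have hcont2 : Continuous (fun u : ℝ => (F - L*t) + L*u) := by fun_prop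
  have hcont3 : Continuous (fun _ : ℝ => F - L*t) := continuous_const
  have hcont4 : Continuous (fun u : ℝ => L*u) := by fun_prop
  have hgint : IntervalIntegrable (fun u => F - L*(t-u)) MeasureTheory.volume (t-w) t :=
    hcont1.intervalIntegrable _ _
  have hi1 : (∫ u in (t-w)..t, (F - L*(t-u))) ≤ ∫ u in (t-w)..t, f u :=
    intervalIntegral.integral_mono_on (by linarith) hgint hfint hlb
  -- compute the explicit integral
  have hcomp : (∫ u in (t-w)..t, (F - L*(t-u))) = w*F - L*w^2/2 := by
    have e1 : (fun u => F - L*(t-u)) = fun u => (F - L*t) + L*u := by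
      funext u; ring
    rw [e1]
    rw [intervalIntegral.integral_add (hcont3.intervalIntegrable _ _)
      (hcont4.intervalIntegrable _ _)]
    rw [intervalIntegral.integral_const, intervalIntegral.integral_const_mul, integral_id]
    simp only [smul_eq_mul]
    ring
  -- splitting
  have hfull1 : IntervalIntegrable f MeasureTheory.volume 0 (t-w) := by
    apply ContinuousOn.intervalIntegrable
    apply hfc.mono
    rw [Set.uIcc_of_le htw0]
    intro u hu
    exact ⟨hu.1, by linarith [hu.2, ht.2]⟩
  have hfull2 : IntervalIntegrable f MeasureTheory.volume t T₀ := by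
    apply ContinuousOn.intervalIntegrable
    apply hfc.mono
    rw [Set.uIcc_of_le ht.2]
    intro u hu
    exact ⟨by linarith [hu.1, htw0], hu.2⟩
  have hsplit : (∫ u in (t-w)..t, f u) ≤ ∫ u in (0:ℝ)..T₀, f u := by
    have e1 : (∫ u in (0:ℝ)..T₀, f u) = (∫ u in (0:ℝ)..(t-w), f u)
        + (∫ u in (t-w)..t, f u) + (∫ u in t..T₀, f u) := by
      rw [intervalIntegral.integral_add_adjacent_intervals hfull1 hfint,
        intervalIntegral.integral_add_adjacent_intervals (hfull1.trans hfint) hfull2]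
    have h2 : (0:ℝ) ≤ ∫ u in (0:ℝ)..(t-w), f u := by
      apply intervalIntegral.integral_nonneg htw0
      intro u hu
      exact hfnn u ⟨hu.1, by linarith [hu.2, ht.2]⟩
    have h3 : (0:ℝ) ≤ ∫ u in t..T₀, f u := by
      apply intervalIntegral.integral_nonneg ht.2
      intro u hu
      exact hfnn u ⟨by linarith [hu.1, htw0], hu.2⟩
    linarith
  -- lower bound for the piece
  have hLw : L * w ≤ F := by
    rw [hwdef]
    rcases le_total ℓ (F/L) with hc | hc
    · rw [min_eq_left hc]
      calc L * ℓ ≤ L * (F/L) := mul_le_mul_of_nonneg_left hc (le_of_lt hL)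
        _ = F := by field_simp
    · rw [min_eq_right hc]
      have : L * (F/L) = F := by field_simp
      linarith [this]
  have hpiece : w*F/2 ≤ ∫ u in (t-w)..t, f u := by
    have h1 : L*w^2/2 ≤ w*F/2 := by nlinarith
    linarith [hcomp ▸ hi1]
  -- final contradiction
  have hδ2 : Real.sqrt (min (ℓ*η/2) (η^2/(2*L)))^2 = min (ℓ*η/2) (η^2/(2*L)) :=
    Real.sq_sqrt (le_min (by positivity) (by positivity))
  have hmin : min (ℓ*η/2) (η^2/(2*L)) ≤ w*F/2 := by
    have hηF : η ≤ F := le_of_lt hcon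
    have hwmin : min ℓ (η/L) ≤ w := by
      rw [hwdef]
      refine min_le_min (le_refl ℓ) ?_
      gcongr
    have hminnn : (0:ℝ) ≤ min ℓ (η/L) := le_min (le_of_lt hℓ) (by positivity)
    have h1 : min ℓ (η/L) * η / 2 ≤ w * F / 2 := by
      have := mul_le_mul hwmin hηF (le_of_lt hη) (le_of_lt hw0)
      linarith
    have h2 : min (ℓ*η/2) (η^2/(2*L)) ≤ min ℓ (η/L) * η / 2 := by
      rcases min_cases ℓ (η/L) with ⟨he, hle⟩ | ⟨he, hle⟩
      · rw [he]
        exact min_le_left _ _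
      · rw [he]
        have e : (η/L) * η / 2 = η^2/(2*L) := by field_simp
        rw [e]
        exact min_le_right _ _
    linarith
  rw [hδ2] at hint
  linarith


lemma main_analysis (C R T₀ T : ℝ) (hC : 0 < C) (hR : 0 < R) (hT₀ : 0 < T₀) (hTT : T₀ ≤ T) :
    ∀ ε > (0:ℝ), ∃ δ > (0:ℝ), ∀ f : ℝ → ℝ,
      ContinuousOn f (Set.Icc 0 T) →
      (∀ t ∈ Set.Icc (0:ℝ) T, 0 ≤ f t) →
      (∀ p t : ℝ, 0 ≤ p → p ≤ t → t ≤ T → |f t - f p| ≤ (C*R) * (t - p)) →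
      Sm f → Bd C R f →
      (∫ t in (0:ℝ)..T₀, f t) < δ^2 → (∫ t in (0:ℝ)..T, f t) < ε^2 := by
  intro ε hε
  set ℓ := min (T₀/2) (1/(2*R)) with hℓdef
  have hℓ : 0 < ℓ := lt_min (by linarith) (by positivity)
  have hℓs : ℓ ≤ 1/(2*R) := min_le_right _ _
  have hℓT : 2*ℓ ≤ T₀ := by
    have := min_le_left (T₀/2) (1/(2*R))
    rw [hℓdef]
    linarith [this]
  set ε1 := ε^2/(2*(T - T₀ + 1)) with hε1def
  have hε1 : 0 < ε1 := by
    rw [hε1def]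
    have : 0 < T - T₀ + 1 := by linarith
    positivity
  set m : ℕ := ⌈(T - T₀) * (4*R)⌉₊ with hmdef
  obtain ⟨η, hη0, hηε1, H⟩ := iter_lemma C R ℓ hC hR hℓ hℓs m ε1 hε1
  obtain ⟨δ₀, hδ₀, Hinit⟩ := initial_bound (C*R) ℓ T₀ (by positivity) hℓ hℓT η hη0
  refine ⟨min δ₀ (ε/2), lt_min hδ₀ (by linarith), ?_⟩
  intro f hfc hfnn hlip hsm hbd hint
  -- initial window smallness
  have hδle : (min δ₀ (ε/2))^2 ≤ δ₀^2 := by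
    have h1 : 0 ≤ min δ₀ (ε/2) := le_min (le_of_lt hδ₀) (by linarith)
    have h2 : min δ₀ (ε/2) ≤ δ₀ := min_le_left _ _
    nlinarith
  have hIccsub : Set.Icc (0:ℝ) T₀ ⊆ Set.Icc (0:ℝ) T := Set.Icc_subset_Icc_right hTT
  have hwin : ∀ t ∈ Set.Icc (T₀ - ℓ) T₀, f t ≤ η := by
    apply Hinit f (hfc.mono hIccsub) (fun t ht => hfnn t (hIccsub ht))
      (fun p t hp hpt htT => hlip p t hp hpt (le_trans htT hTT))
    linarith [hint, hδle]
  have ha : (0:ℝ) < T₀ - ℓ := by linarith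
  have hsmallwin : ∀ t ∈ Set.Icc (T₀ - ℓ) ((T₀ - ℓ) + ℓ), |f t| ≤ η := by
    intro t ht
    have ht' : t ∈ Set.Icc (T₀ - ℓ) T₀ := ⟨ht.1, by linarith [ht.2]⟩
    rw [abs_of_nonneg (hfnn t ⟨by linarith [ht.1], by linarith [ht.2, hTT]⟩)]
    exact hwin t ht'
  have hprop := H f hsm hbd (T₀ - ℓ) ha hsmallwin
  -- pointwise bound on [T₀, T]
  have hmT : T - T₀ ≤ (m:ℝ) * (1/(4*R)) := by
    have h1 : (T - T₀) * (4*R) ≤ (m:ℝ) := Nat.le_ceil _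
    have h2 : (0:ℝ) < 4*R := by positivity
    calc T - T₀ = ((T - T₀) * (4*R)) * (1/(4*R)) := by field_simp
      _ ≤ (m:ℝ) * (1/(4*R)) := by
          apply mul_le_mul_of_nonneg_right h1
          positivity
  have hpt : ∀ t ∈ Set.Icc T₀ T, f t ≤ ε1 := by
    intro t ht
    have h1 : t ∈ Set.Icc (T₀ - ℓ) ((T₀ - ℓ) + ℓ + (m:ℝ) * (1/(4*R))) := by
      constructor
      · linarith [ht.1]
      · have : (T₀ - ℓ) + ℓ + (m:ℝ)*(1/(4*R)) = T₀ + (m:ℝ)*(1/(4*R)) := by ring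
        rw [this]
        linarith [ht.2, hmT]
    have := hprop t h1
    exact le_trans (le_abs_self _) this
  -- integral split
  have hint1 : IntervalIntegrable f MeasureTheory.volume 0 T₀ := by
    apply ContinuousOn.intervalIntegrable
    apply hfc.mono
    rw [Set.uIcc_of_le (le_of_lt hT₀)]
    exact hIccsub
  have hint2 : IntervalIntegrable f MeasureTheory.volume T₀ T := by
    apply ContinuousOn.intervalIntegrable
    apply hfc.mono
    rw [Set.uIcc_of_le hTT]
    exact fun u hu => ⟨by linarith [hu.1], hu.2⟩
  have hsplit : (∫ u in (0:ℝ)..T, f u) = (∫ u in (0:ℝ)..T₀, f u) + ∫ u in T₀..T, f u :=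
    (intervalIntegral.integral_add_adjacent_intervals hint1 hint2).symm
  have htail : (∫ u in T₀..T, f u) ≤ ε1 * (T - T₀) := by
    have h1 : (∫ u in T₀..T, f u) ≤ ∫ _ in T₀..T, ε1 := by
      apply intervalIntegral.integral_mono_on hTT hint2
        (intervalIntegrable_const)
      exact hpt
    rw [intervalIntegral.integral_const, smul_eq_mul] at h1
    linarith
  have htail2 : ε1 * (T - T₀) < ε^2/2 := by
    rw [hε1def]
    have h1 : (0:ℝ) < 2*(T - T₀ + 1) := by linarith
    rw [div_mul_eq_mul_div, div_lt_iff₀ h1]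
    nlinarith [pow_pos hε 2]
  have hδε : (min δ₀ (ε/2))^2 ≤ ε^2/4 := by
    have h1 : 0 ≤ min δ₀ (ε/2) := le_min (le_of_lt hδ₀) (by linarith)
    have h2 : min δ₀ (ε/2) ≤ ε/2 := min_le_right _ _
    nlinarith
  rw [hsplit]
  nlinarith [hint, htail, htail2, hδε]


lemma sum_abs_coeff {n : ℕ} (M : ℝ) (pv : Fin n → ℝ) (c : Fin n → ℝ)
    (h : ∀ j, |c j| ≤ M * pv j) (hpv1 : ∑ j, pv j = 1) : ∑ j, |c j| ≤ M := by
  calc ∑ j, |c j| ≤ ∑ j, M * pv j := Finset.sum_le_sum (fun j _ => h j)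
    _ = M := by rw [← Finset.mul_sum, hpv1, mul_one]

lemma lincomb_iter {n : ℕ} (K : ℕ) (c : Fin n → ℝ) (z : ℝ → Fin n → ℝ)
    (hz : ∀ j, ContDiffOn ℝ K (fun t => z t j) S) {t : ℝ} (ht : t ∈ S) :
    iteratedDerivWithin K (fun x => ∑ j, c j * z x j) S t
      = ∑ j, c j * iteratedDerivWithin K (fun x => z x j) S t := by
  have h1 : iteratedDerivWithin K (fun x => ∑ j, c j * z x j) S t
      = ∑ j, iteratedDerivWithin K (fun x => c j * z x j) S t := by
    simp only [iteratedDerivWithin_eq_iteratedFDerivWithin]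
    rw [iteratedFDerivWithin_fun_sum_apply hsU ht (fun j _ => (contDiffOn_const.mul (hz j)) t ht)]
    simp
  refine h1.trans (Finset.sum_congr rfl fun j _ => ?_)
  exact iteratedDerivWithin_const_mul ht hsU (c j) (hz j t ht)

lemma lincomb_bd {n : ℕ} (M B : ℝ) (K : ℕ) (pv : Fin n → ℝ) (c : Fin n → ℝ) (z : ℝ → Fin n → ℝ)
    (hc : ∀ j, |c j| ≤ M * pv j) (hpv1 : ∑ j, pv j = 1)
    (hz : ∀ j, ContDiffOn ℝ K (fun t => z t j) S)
    (hB : ∀ j, ∀ u ∈ S, |iteratedDerivWithin K (fun x => z x j) S u| ≤ B)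
    (hB0 : 0 ≤ B) {t : ℝ} (ht : t ∈ S) :
    |iteratedDerivWithin K (fun x => ∑ j, c j * z x j) S t| ≤ M * B := by
  rw [lincomb_iter K c z hz ht]
  calc |∑ j, c j * iteratedDerivWithin K (fun x => z x j) S t|
      ≤ ∑ j, |c j * iteratedDerivWithin K (fun x => z x j) S t| :=
        Finset.abs_sum_le_sum_abs _ _
    _ ≤ ∑ j, |c j| * B := by
        apply Finset.sum_le_sum
        intro j _
        rw [abs_mul]
        exact mul_le_mul_of_nonneg_left (hB j t ht) (abs_nonneg _)
    _ = (∑ j, |c j|) * B := by rw [Finset.sum_mul]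
    _ ≤ M * B := mul_le_mul_of_nonneg_right (sum_abs_coeff M pv c hc hpv1) hB0

lemma z_smooth {n : ℕ} (W : Matrix (Fin n) (Fin n) ℝ) (pv γ : Fin n → ℝ) (z : ℝ → Fin n → ℝ)
    (hode : ∀ i, ∀ t ∈ Set.Ici (0:ℝ), HasDerivWithinAt (fun s => z s i)
      ((1 - z t i) * (∑ j, W i j * pv j * z t j) - γ i * z t i) (Set.Ici 0) t) :
    ∀ (k : ℕ) (i : Fin n), ContDiffOn ℝ k (fun t => z t i) S := by
  have hz' : ∀ i, ∀ t ∈ S, HasDerivAt (fun s => z s i)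
      ((1 - z t i) * (∑ j, W i j * pv j * z t j) - γ i * z t i) t :=
    fun i t ht => (hode i t (Set.mem_Ici.2 (le_of_lt ht))).hasDerivAt (Ici_mem_nhds ht)
  intro k
  induction k with
  | zero =>
    intro i
    have hc : ContinuousOn (fun t => z t i) S :=
      fun t ht => (hz' i t ht).continuousAt.continuousWithinAt
    exact_mod_cast contDiffOn_zero.2 hc
  | succ k IH =>
    intro i
    have hcast : ((k+1:ℕ) : WithTop ℕ∞) = (k:WithTop ℕ∞) + 1 := by push_cast; rfl
    rw [hcast, contDiffOn_succ_iff_deriv_of_isOpen isOpen_Ioi]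
    refine ⟨fun t ht => (hz' i t ht).differentiableAt.differentiableWithinAt, ?_, ?_⟩
    · intro hω
      exact absurd hω (by exact_mod_cast WithTop.natCast_ne_top k)
    · refine ContDiffOn.congr ?_ (fun t ht => (hz' i t ht).deriv)
      exact ((contDiffOn_const.sub (IH i)).mul
        (ContDiffOn.sum fun j _ => contDiffOn_const.mul (IH j))).sub
        (contDiffOn_const.mul (IH i))

lemma z_iter_bound {n : ℕ} (M : ℝ) (hM : 0 < M) (W : Matrix (Fin n) (Fin n) ℝ)
    (pv γ : Fin n → ℝ) (z : ℝ → Fin n → ℝ)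
    (hW : ∀ i j, W i j ∈ Set.Icc (0:ℝ) M) (hpv : ∀ i, pv i ≥ 0) (hpv1 : ∑ i, pv i = 1)
    (hγ : ∀ i, γ i ∈ Set.Icc (0:ℝ) M)
    (hode : ∀ i, ∀ t ∈ Set.Ici (0:ℝ), HasDerivWithinAt (fun s => z s i)
      ((1 - z t i) * (∑ j, W i j * pv j * z t j) - γ i * z t i) (Set.Ici 0) t)
    (hz01 : ∀ t ∈ Set.Ici (0:ℝ), ∀ i, z t i ∈ Set.Icc (0:ℝ) 1) :
    ∀ (k : ℕ) (i : Fin n), ∀ t ∈ S, |iteratedDerivWithin k (fun s => z s i) S t|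
      ≤ (k.factorial : ℝ) * (3*M)^k := by
  have hz' : ∀ i, ∀ t ∈ S, HasDerivAt (fun s => z s i)
      ((1 - z t i) * (∑ j, W i j * pv j * z t j) - γ i * z t i) t :=
    fun i t ht => (hode i t (Set.mem_Ici.2 (le_of_lt ht))).hasDerivAt (Ici_mem_nhds ht)
  have hzsm := z_smooth W pv γ z hode
  have hcW : ∀ i j, |W i j * pv j| ≤ M * pv j := by
    intro i j
    rw [abs_mul, abs_of_nonneg (hW i j).1, abs_of_nonneg (hpv j)]
    exact mul_le_mul_of_nonneg_right (hW i j).2 (hpv j)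
  intro k
  induction k using Nat.strong_induction_on with
  | _ k IHs =>
    rcases k with _ | K
    · intro i t ht
      have h01 := hz01 t (Set.mem_Ici.2 (le_of_lt ht)) i
      simp only [iteratedDerivWithin_zero, Nat.factorial_zero, pow_zero, Nat.cast_one, mul_one]
      rw [abs_le]
      constructor <;> linarith [h01.1, h01.2]
    · intro i t ht
      have hIH : ∀ m, m ≤ K → ∀ (j : Fin n), ∀ u ∈ S,
          |iteratedDerivWithin m (fun s => z s j) S u| ≤ (m.factorial:ℝ) * (3*M)^m :=
        fun m hm j u hu => IHs m (Nat.lt_succ_of_le hm) j u hu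
      -- bound for iterated derivatives of Si
      set Si : ℝ → ℝ := fun u => ∑ j, W i j * pv j * z u j with hSidef
      have hSism : ∀ (m:ℕ), ContDiffOn ℝ m Si S := fun m =>
        ContDiffOn.sum fun j _ => contDiffOn_const.mul (hzsm m j)
      have hSibound : ∀ (m:ℕ), m ≤ K → ∀ u ∈ S, |iteratedDerivWithin m Si S u|
          ≤ M * ((m.factorial:ℝ) * (3*M)^m) := by
        intro m hm u hu
        exact lincomb_bd M ((m.factorial:ℝ) * (3*M)^m) m pv (fun j => W i j * pv j) z
          (hcW i) hpv1 (fun j => hzsm m j) (fun j => hIH m hm j) (by positivity) hu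
      -- rewrite (K+1)-th derivative
      set Fi : ℝ → ℝ := fun u => Si u - z u i * Si u - γ i * z u i with hFidef
      have heq : Set.EqOn (derivWithin (fun s => z s i) S) Fi S := by
        intro u hu
        rw [derivWithin_of_isOpen isOpen_Ioi hu, (hz' i u hu).deriv, hFidef, hSidef]
        ring
      have e1 : iteratedDerivWithin (K+1) (fun s => z s i) S t
          = iteratedDerivWithin K Fi S t := by
        rw [iter_succ' ht K]
        exact iteratedDerivWithin_congr heq ht
      rw [e1]
      -- decompose
      have eFi : Fi = (fun u => Si u - z u i * Si u) - (fun u => γ i * z u i) := by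
        funext u; simp [hFidef]
      have eG : (fun u => Si u - z u i * Si u)
          = Si - (fun u => z u i * Si u) := by
        funext u; simp
      have hG2sm : ContDiffOn ℝ K (fun u => z u i * Si u) S := (hzsm K i).mul (hSism K)
      have hG3sm : ContDiffOn ℝ K (fun u => γ i * z u i) S := contDiffOn_const.mul (hzsm K i)
      have e2 : iteratedDerivWithin K Fi S t
          = iteratedDerivWithin K Si S t - iteratedDerivWithin K (fun u => z u i * Si u) S t
            - iteratedDerivWithin K (fun u => γ i * z u i) S t := by
        rw [eFi, iteratedDerivWithin_sub ht hsU (((hSism K).sub hG2sm) t ht) (hG3sm t ht)]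
        congr 1
        rw [eG, iteratedDerivWithin_sub ht hsU ((hSism K) t ht) (hG2sm t ht)]
      rw [e2]
      -- bound each piece
      have hb1 : |iteratedDerivWithin K Si S t| ≤ M * ((K.factorial:ℝ) * (3*M)^K) :=
        hSibound K (le_refl K) t ht
      have hb3 : |iteratedDerivWithin K (fun u => γ i * z u i) S t|
          ≤ M * ((K.factorial:ℝ) * (3*M)^K) := by
        rw [iteratedDerivWithin_const_mul ht hsU (γ i) (hzsm K i t ht), abs_mul]
        apply mul_le_mul
        · rw [abs_of_nonneg (hγ i).1]; exact (hγ i).2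
        · exact hIH K (le_refl K) i t ht
        · exact abs_nonneg _
        · exact le_of_lt hM
      have hb2 : |iteratedDerivWithin K (fun u => z u i * Si u) S t|
          ≤ M * (((K+1).factorial:ℝ) * (3*M)^K) := by
        have hmul := norm_iteratedFDerivWithin_mul_le (𝕜 := ℝ) (A := ℝ)
          (hzsm K i) (hSism K) hsU ht (le_refl (K : WithTop ℕ∞))
        have hmul' : |iteratedDerivWithin K (fun u => z u i * Si u) S t| ≤
            ∑ m ∈ Finset.range (K + 1), (K.choose m : ℝ)
              * |iteratedDerivWithin m (fun s => z s i) S t|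
              * |iteratedDerivWithin (K-m) Si S t| := by
          simpa [norm_iteratedFDerivWithin_eq_norm_iteratedDerivWithin, Real.norm_eq_abs]
            using hmul
        refine le_trans hmul' ?_
        have hterm : ∀ m ∈ Finset.range (K+1), (K.choose m : ℝ)
              * |iteratedDerivWithin m (fun s => z s i) S t|
              * |iteratedDerivWithin (K-m) Si S t|
            ≤ M * ((K.factorial:ℝ) * (3*M)^K) := by
          intro m hm
          have hmK : m ≤ K := Nat.lt_succ_iff.1 (Finset.mem_range.1 hm)
          have h1 := hIH m hmK i t ht
          have h2 := hSibound (K-m) (Nat.sub_le K m) t ht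
          have hchoose : (0:ℝ) ≤ (K.choose m : ℝ) := Nat.cast_nonneg _
          have hmain : (K.choose m : ℝ) * ((m.factorial:ℝ) * (3*M)^m)
              * (M * (((K-m).factorial:ℝ) * (3*M)^(K-m)))
              = M * ((K.factorial:ℝ) * (3*M)^K) := by
            have hpow : (3*M)^m * (3*M)^(K-m) = (3*M)^K := by
              rw [← pow_add]
              congr 1
              omega
            have hfac : (K.choose m : ℝ) * (m.factorial:ℝ) * ((K-m).factorial:ℝ)
                = (K.factorial:ℝ) := by
              exact_mod_cast congrArg (Nat.cast (R := ℝ))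
                (Nat.choose_mul_factorial_mul_factorial hmK)
            calc (K.choose m : ℝ) * ((m.factorial:ℝ) * (3*M)^m)
                * (M * (((K-m).factorial:ℝ) * (3*M)^(K-m)))
                = M * (((K.choose m : ℝ) * (m.factorial:ℝ) * ((K-m).factorial:ℝ))
                  * ((3*M)^m * (3*M)^(K-m))) := by ring
              _ = M * ((K.factorial:ℝ) * (3*M)^K) := by rw [hpow, hfac]
          calc (K.choose m : ℝ) * |iteratedDerivWithin m (fun s => z s i) S t|
              * |iteratedDerivWithin (K-m) Si S t|
              ≤ (K.choose m : ℝ) * ((m.factorial:ℝ) * (3*M)^m)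
                * (M * (((K-m).factorial:ℝ) * (3*M)^(K-m))) := by
                apply mul_le_mul
                · exact mul_le_mul_of_nonneg_left h1 hchoose
                · exact h2
                · exact abs_nonneg _
                · positivity
            _ = M * ((K.factorial:ℝ) * (3*M)^K) := hmain
        calc ∑ m ∈ Finset.range (K + 1), (K.choose m : ℝ)
              * |iteratedDerivWithin m (fun s => z s i) S t|
              * |iteratedDerivWithin (K-m) Si S t|
            ≤ ∑ m ∈ Finset.range (K + 1), M * ((K.factorial:ℝ) * (3*M)^K) :=
              Finset.sum_le_sum hterm
          _ = (K+1) * (M * ((K.factorial:ℝ) * (3*M)^K)) := by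
              rw [Finset.sum_const, Finset.card_range]
              push_cast
              ring
          _ = M * (((K+1).factorial:ℝ) * (3*M)^K) := by
              rw [Nat.factorial_succ]
              push_cast
              ring
      -- combine
      have hfle : (K.factorial:ℝ) ≤ ((K+1).factorial:ℝ) := by
        exact_mod_cast Nat.factorial_le (Nat.le_succ K)
      have hpownn : (0:ℝ) ≤ (3*M)^K := by positivity
      have habs : |iteratedDerivWithin K Si S t
          - iteratedDerivWithin K (fun u => z u i * Si u) S t
          - iteratedDerivWithin K (fun u => γ i * z u i) S t|
          ≤ M * ((K.factorial:ℝ) * (3*M)^K) + M * (((K+1).factorial:ℝ) * (3*M)^K)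
            + M * ((K.factorial:ℝ) * (3*M)^K) := by
        have t1 := abs_sub (iteratedDerivWithin K Si S t
          - iteratedDerivWithin K (fun u => z u i * Si u) S t)
          (iteratedDerivWithin K (fun u => γ i * z u i) S t)
        have t2 := abs_sub (iteratedDerivWithin K Si S t)
          (iteratedDerivWithin K (fun u => z u i * Si u) S t)
        linarith
      refine le_trans habs ?_
      have e3 : (((K+1).factorial):ℝ) * (3*M)^(K+1)
          = 3*M*(((K+1).factorial:ℝ) * (3*M)^K) := by
        rw [pow_succ]
        ring
      rw [e3]
      have key : M * ((K.factorial:ℝ) * (3*M)^K) ≤ M * (((K+1).factorial:ℝ) * (3*M)^K) :=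
        mul_le_mul_of_nonneg_left (mul_le_mul_of_nonneg_right hfle hpownn) hM.le
      linarith


lemma iterDW_sum {n : ℕ} (K : ℕ) (g : Fin n → ℝ → ℝ) {t : ℝ} (ht : t ∈ S)
    (hg : ∀ j, ContDiffOn ℝ K (g j) S) :
    iteratedDerivWithin K (fun x => ∑ j, g j x) S t
      = ∑ j, iteratedDerivWithin K (g j) S t := by
  simp only [iteratedDerivWithin_eq_iteratedFDerivWithin]
  rw [iteratedFDerivWithin_fun_sum_apply hsU ht (fun j _ => hg j t ht)]
  simp

lemma f_all {n : ℕ} (M : ℝ) (hM : 0 < M) (W W' : Matrix (Fin n) (Fin n) ℝ)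
    (pv γ : Fin n → ℝ) (z : ℝ → Fin n → ℝ)
    (hW : ∀ i j, W i j ∈ Set.Icc (0:ℝ) M) (hW' : ∀ i j, W' i j ∈ Set.Icc (0:ℝ) M)
    (hpv : ∀ i, pv i ≥ 0) (hpv1 : ∑ i, pv i = 1)
    (hγ : ∀ i, γ i ∈ Set.Icc (0:ℝ) M)
    (hode : ∀ i, ∀ t ∈ Set.Ici (0:ℝ), HasDerivWithinAt (fun s => z s i)
      ((1 - z t i) * (∑ j, W i j * pv j * z t j) - γ i * z t i) (Set.Ici 0) t)
    (hz01 : ∀ t ∈ Set.Ici (0:ℝ), ∀ i, z t i ∈ Set.Icc (0:ℝ) 1) :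
    Sm (fun t => ∑ i, ((∑ j, W i j * pv j * z t j) - (∑ j, W' i j * pv j * z t j))^2 * pv i)
    ∧ Bd (M^2) (6*M)
      (fun t => ∑ i, ((∑ j, W i j * pv j * z t j) - (∑ j, W' i j * pv j * z t j))^2 * pv i)
    ∧ ContinuousOn
      (fun t => ∑ i, ((∑ j, W i j * pv j * z t j) - (∑ j, W' i j * pv j * z t j))^2 * pv i)
      (Set.Ici 0)
    ∧ (∀ p t : ℝ, 0 ≤ p → p ≤ t →
      |(∑ i, ((∑ j, W i j * pv j * z t j) - (∑ j, W' i j * pv j * z t j))^2 * pv i)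
        - (∑ i, ((∑ j, W i j * pv j * z p j) - (∑ j, W' i j * pv j * z p j))^2 * pv i)|
        ≤ (M^2*(6*M))*(t - p)) := by
  have hzsm := z_smooth W pv γ z hode
  have hzbd := z_iter_bound M hM W pv γ z hW hpv hpv1 hγ hode hz01
  set d : Fin n → Fin n → ℝ := fun i j => (W i j - W' i j) * pv j with hddef
  have hd : ∀ i j, |d i j| ≤ M * pv j := by
    intro i j
    rw [hddef]
    simp only []
    rw [abs_mul, abs_of_nonneg (hpv j)]
    apply mul_le_mul_of_nonneg_right _ (hpv j)
    rw [abs_le]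
    constructor
    · linarith [(hW i j).1, (hW' i j).2]
    · linarith [(hW i j).2, (hW' i j).1]
  set g : Fin n → ℝ → ℝ := fun i t => ∑ j, d i j * z t j with hgdef
  have hgsum : ∀ (i : Fin n) (t : ℝ), (∑ j, W i j * pv j * z t j)
      - (∑ j, W' i j * pv j * z t j) = g i t := by
    intro i t
    rw [hgdef]
    simp only []
    rw [← Finset.sum_sub_distrib]
    exact Finset.sum_congr rfl fun j _ => by rw [hddef]; ring
  have ef : (fun t => ∑ i, ((∑ j, W i j * pv j * z t j)
      - (∑ j, W' i j * pv j * z t j))^2 * pv i)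
      = fun t => ∑ i, pv i * (g i t * g i t) := by
    funext t
    exact Finset.sum_congr rfl fun i _ => by rw [hgsum i t]; ring
  have hgsm : ∀ (k : ℕ) (i : Fin n), ContDiffOn ℝ k (g i) S :=
    fun k i => ContDiffOn.sum fun j _ => contDiffOn_const.mul (hzsm k j)
  have hgbd : ∀ (k : ℕ) (i : Fin n), ∀ t ∈ S, |iteratedDerivWithin k (g i) S t|
      ≤ M * ((k.factorial:ℝ) * (3*M)^k) := by
    intro k i t ht
    exact lincomb_bd M ((k.factorial:ℝ) * (3*M)^k) k pv (d i) z (hd i) hpv1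
      (fun j => hzsm k j) (fun j u hu => hzbd k j u hu) (by positivity) ht
  rw [ef]
  refine ⟨?_, ?_, ?_, ?_⟩
  · -- Sm
    intro k
    exact ContDiffOn.sum fun i _ => contDiffOn_const.mul ((hgsm k i).mul (hgsm k i))
  · -- Bd
    intro k t ht
    have e1 : iteratedDerivWithin k (fun t => ∑ i, pv i * (g i t * g i t)) S t
        = ∑ i, pv i * iteratedDerivWithin k (fun t => g i t * g i t) S t := by
      rw [iterDW_sum k (fun i t => pv i * (g i t * g i t)) ht
        (fun i => contDiffOn_const.mul ((hgsm k i).mul (hgsm k i)))]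
      exact Finset.sum_congr rfl fun i _ =>
        iteratedDerivWithin_const_mul ht hsU (pv i) (((hgsm k i).mul (hgsm k i)) t ht)
    rw [e1]
    -- per-i product bound
    have hprod : ∀ i : Fin n, |iteratedDerivWithin k (fun t => g i t * g i t) S t|
        ≤ M^2 * (((k+1).factorial:ℝ) * (3*M)^k) := by
      intro i
      have hmul := norm_iteratedFDerivWithin_mul_le (𝕜 := ℝ) (A := ℝ)
        (hgsm k i) (hgsm k i) hsU ht (le_refl (k : WithTop ℕ∞))
      have hmul' : |iteratedDerivWithin k (fun t => g i t * g i t) S t| ≤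
          ∑ m ∈ Finset.range (k + 1), (k.choose m : ℝ)
            * |iteratedDerivWithin m (g i) S t| * |iteratedDerivWithin (k-m) (g i) S t| := by
        simpa [norm_iteratedFDerivWithin_eq_norm_iteratedDerivWithin, Real.norm_eq_abs]
          using hmul
      refine le_trans hmul' ?_
      have hterm : ∀ m ∈ Finset.range (k+1), (k.choose m : ℝ)
            * |iteratedDerivWithin m (g i) S t| * |iteratedDerivWithin (k-m) (g i) S t|
          ≤ M^2 * ((k.factorial:ℝ) * (3*M)^k) := by
        intro m hm
        have hmk : m ≤ k := Nat.lt_succ_iff.1 (Finset.mem_range.1 hm)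
        have h1 := hgbd m i t ht
        have h2 := hgbd (k-m) i t ht
        have hmain : (k.choose m : ℝ) * (M * ((m.factorial:ℝ) * (3*M)^m))
            * (M * (((k-m).factorial:ℝ) * (3*M)^(k-m)))
            = M^2 * ((k.factorial:ℝ) * (3*M)^k) := by
          have hpow : (3*M)^m * (3*M)^(k-m) = (3*M)^k := by
            rw [← pow_add]
            congr 1
            omega
          have hfac : (k.choose m : ℝ) * (m.factorial:ℝ) * ((k-m).factorial:ℝ)
              = (k.factorial:ℝ) := by
            exact_mod_cast congrArg (Nat.cast (R := ℝ))
              (Nat.choose_mul_factorial_mul_factorial hmk)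
          calc (k.choose m : ℝ) * (M * ((m.factorial:ℝ) * (3*M)^m))
              * (M * (((k-m).factorial:ℝ) * (3*M)^(k-m)))
              = M^2 * (((k.choose m : ℝ) * (m.factorial:ℝ) * ((k-m).factorial:ℝ))
                * ((3*M)^m * (3*M)^(k-m))) := by ring
            _ = M^2 * ((k.factorial:ℝ) * (3*M)^k) := by rw [hpow, hfac]
        calc (k.choose m : ℝ) * |iteratedDerivWithin m (g i) S t|
            * |iteratedDerivWithin (k-m) (g i) S t|
            ≤ (k.choose m : ℝ) * (M * ((m.factorial:ℝ) * (3*M)^m))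
              * (M * (((k-m).factorial:ℝ) * (3*M)^(k-m))) := by
              apply mul_le_mul
              · exact mul_le_mul_of_nonneg_left h1 (Nat.cast_nonneg _)
              · exact h2
              · exact abs_nonneg _
              · positivity
          _ = M^2 * ((k.factorial:ℝ) * (3*M)^k) := hmain
      calc ∑ m ∈ Finset.range (k + 1), (k.choose m : ℝ)
            * |iteratedDerivWithin m (g i) S t| * |iteratedDerivWithin (k-m) (g i) S t|
          ≤ ∑ m ∈ Finset.range (k + 1), M^2 * ((k.factorial:ℝ) * (3*M)^k) :=
            Finset.sum_le_sum hterm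
        _ = (k+1) * (M^2 * ((k.factorial:ℝ) * (3*M)^k)) := by
            rw [Finset.sum_const, Finset.card_range]
            push_cast
            ring
        _ = M^2 * (((k+1).factorial:ℝ) * (3*M)^k) := by
            rw [Nat.factorial_succ]
            push_cast
            ring
    calc |∑ i, pv i * iteratedDerivWithin k (fun t => g i t * g i t) S t|
        ≤ ∑ i, pv i * (M^2 * (((k+1).factorial:ℝ) * (3*M)^k)) := by
          refine le_trans (Finset.abs_sum_le_sum_abs _ _) (Finset.sum_le_sum fun i _ => ?_)
          rw [abs_mul, abs_of_nonneg (hpv i)]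
          exact mul_le_mul_of_nonneg_left (hprod i) (hpv i)
      _ = M^2 * (((k+1).factorial:ℝ) * (3*M)^k) := by
          rw [← Finset.sum_mul, hpv1, one_mul]
      _ ≤ M^2 * (k.factorial:ℝ) * (6*M)^k := by
          have h2pow : ((k:ℝ)+1) ≤ 2^k := by
            exact_mod_cast (Nat.lt_two_pow_self (n := k))
          have e6 : ((6:ℝ)*M)^k = 2^k * (3*M)^k := by
            rw [← mul_pow]
            congr 1
            ring
          rw [e6, Nat.factorial_succ]
          push_cast
          have hpownn : (0:ℝ) ≤ (3*M)^k := by positivity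
          have hfnn : (0:ℝ) ≤ (k.factorial:ℝ) := Nat.cast_nonneg _
          have key : ((k:ℝ)+1) * (k.factorial:ℝ) * (3*M)^k
              ≤ 2^k * (k.factorial:ℝ) * (3*M)^k := by
            apply mul_le_mul_of_nonneg_right _ hpownn
            exact mul_le_mul_of_nonneg_right h2pow hfnn
          nlinarith [sq_nonneg M, hM]
  · -- continuity on Ici 0
    have hzc : ∀ i, ContinuousOn (fun t => z t i) (Set.Ici 0) :=
      fun i t ht => (hode i t ht).continuousWithinAt
    apply continuousOn_finset_sum
    intro i _
    exact continuousOn_const.mul ((ContinuousOn.mul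
      (continuousOn_finset_sum _ fun j _ => continuousOn_const.mul (hzc j))
      (continuousOn_finset_sum _ fun j _ => continuousOn_const.mul (hzc j))))
  · -- Lipschitz
    intro p t hp hpt
    -- derivative of f within Ici u at u
    have hzb : ∀ u ∈ Set.Ici (0:ℝ), ∀ j, |z u j| ≤ 1 := by
      intro u hu j
      have := hz01 u hu j
      rw [abs_le]
      exact ⟨by linarith [this.1], this.2⟩
    have hgb : ∀ u ∈ Set.Ici (0:ℝ), ∀ i, |g i u| ≤ M := by
      intro u hu i
      rw [hgdef]
      simp only []
      calc |∑ j, d i j * z u j| ≤ ∑ j, |d i j * z u j| := Finset.abs_sum_le_sum_abs _ _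
        _ ≤ ∑ j, M * pv j := by
            apply Finset.sum_le_sum
            intro j _
            rw [abs_mul]
            calc |d i j| * |z u j| ≤ (M * pv j) * 1 :=
              mul_le_mul (hd i j) (hzb u hu j) (abs_nonneg _) (mul_nonneg hM.le (hpv j))
              _ = M * pv j := by ring
        _ = M := by rw [← Finset.mul_sum, hpv1, mul_one]
    have hZdb : ∀ u ∈ Set.Ici (0:ℝ), ∀ j, |(1 - z u j) * (∑ l, W j l * pv l * z u l)
        - γ j * z u j| ≤ 2*M := by
      intro u hu j
      have h1 : |∑ l, W j l * pv l * z u l| ≤ M := by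
        calc |∑ l, W j l * pv l * z u l| ≤ ∑ l, |W j l * pv l * z u l| :=
            Finset.abs_sum_le_sum_abs _ _
          _ ≤ ∑ l, M * pv l := by
              apply Finset.sum_le_sum
              intro l _
              rw [abs_mul, abs_mul, abs_of_nonneg (hW j l).1, abs_of_nonneg (hpv l)]
              calc W j l * pv l * |z u l| ≤ M * pv l * 1 := by
                    apply mul_le_mul _ (hzb u hu l) (abs_nonneg _) (mul_nonneg hM.le (hpv l))
                    exact mul_le_mul_of_nonneg_right (hW j l).2 (hpv l)
                _ = M * pv l := by ring
          _ = M := by rw [← Finset.mul_sum, hpv1, mul_one]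
      have h2 : |1 - z u j| ≤ 1 := by
        have := hz01 u hu j
        rw [abs_le]
        constructor <;> [linarith [this.2]; linarith [this.1]]
      have h3 : |γ j * z u j| ≤ M := by
        rw [abs_mul, abs_of_nonneg (hγ j).1]
        calc γ j * |z u j| ≤ M * 1 := mul_le_mul (hγ j).2 (hzb u hu j) (abs_nonneg _) hM.le
          _ = M := by ring
      calc |(1 - z u j) * (∑ l, W j l * pv l * z u l) - γ j * z u j|
          ≤ |(1 - z u j) * (∑ l, W j l * pv l * z u l)| + |γ j * z u j| := abs_sub _ _
        _ ≤ 1 * M + M := by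
            rw [abs_mul]
            have := mul_le_mul h2 h1 (abs_nonneg _) zero_le_one
            linarith [h3]
        _ = 2*M := by ring
    -- derivative construction
    have hfd : ∀ u ∈ Set.Ico p t, HasDerivWithinAt
        (fun x => ∑ i, pv i * (g i x * g i x))
        (∑ i, pv i * ((∑ j, d i j * ((1 - z u j) * (∑ l, W j l * pv l * z u l) - γ j * z u j))
          * g i u + g i u * (∑ j, d i j * ((1 - z u j) * (∑ l, W j l * pv l * z u l)
          - γ j * z u j)))) (Set.Ici u) u := by
      intro u hu
      have hu0 : u ∈ Set.Ici (0:ℝ) := le_trans hp hu.1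
      have hzd : ∀ j, HasDerivWithinAt (fun s => z s j)
          ((1 - z u j) * (∑ l, W j l * pv l * z u l) - γ j * z u j) (Set.Ici u) u :=
        fun j => (hode j u hu0).mono (Set.Ici_subset_Ici.2 hu0)
      refine HasDerivWithinAt.fun_sum (fun i _ => ?_)
      have hgd : HasDerivWithinAt (g i)
          (∑ j, d i j * ((1 - z u j) * (∑ l, W j l * pv l * z u l) - γ j * z u j))
          (Set.Ici u) u := by
        rw [hgdef]
        exact HasDerivWithinAt.fun_sum (fun j _ => (hzd j).const_mul (d i j))
      exact ((hgd.mul hgd).const_mul (pv i))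
    -- bound on the derivative
    have hA : ∀ u ∈ Set.Ici (0:ℝ), ∀ i : Fin n,
        |∑ j, d i j * ((1 - z u j) * (∑ l, W j l * pv l * z u l) - γ j * z u j)|
          ≤ 2*M^2 := by
      intro u hu i
      calc |∑ j, d i j * ((1 - z u j) * (∑ l, W j l * pv l * z u l) - γ j * z u j)|
          ≤ ∑ j, |d i j * ((1 - z u j) * (∑ l, W j l * pv l * z u l) - γ j * z u j)| :=
            Finset.abs_sum_le_sum_abs _ _
        _ ≤ ∑ j, (M * pv j) * (2*M) := by
            apply Finset.sum_le_sum
            intro j _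
            rw [abs_mul]
            exact mul_le_mul (hd i j) (hZdb u hu j) (abs_nonneg _)
              (mul_nonneg hM.le (hpv j))
        _ = 2*M^2 := by
            have e : ∀ j : Fin n, (M * pv j) * (2*M) = (2*M^2) * pv j := fun j => by ring
            rw [Finset.sum_congr rfl (fun j _ => e j), ← Finset.mul_sum, hpv1, mul_one]
    have hbound : ∀ u ∈ Set.Ico p t,
        ‖∑ i, pv i * ((∑ j, d i j * ((1 - z u j) * (∑ l, W j l * pv l * z u l)
          - γ j * z u j)) * g i u + g i u * (∑ j, d i j * ((1 - z u j)
          * (∑ l, W j l * pv l * z u l) - γ j * z u j)))‖ ≤ M^2*(6*M) := by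
      intro u hu
      have hu0 : u ∈ Set.Ici (0:ℝ) := le_trans hp hu.1
      rw [Real.norm_eq_abs]
      calc |∑ i, pv i * ((∑ j, d i j * ((1 - z u j) * (∑ l, W j l * pv l * z u l)
            - γ j * z u j)) * g i u + g i u * (∑ j, d i j * ((1 - z u j)
            * (∑ l, W j l * pv l * z u l) - γ j * z u j)))|
          ≤ ∑ i, pv i * (2*M^2 * M + M * (2*M^2)) := by
            refine le_trans (Finset.abs_sum_le_sum_abs _ _) (Finset.sum_le_sum fun i _ => ?_)
            rw [abs_mul, abs_of_nonneg (hpv i)]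
            apply mul_le_mul_of_nonneg_left _ (hpv i)
            calc |(∑ j, d i j * ((1 - z u j) * (∑ l, W j l * pv l * z u l)
                  - γ j * z u j)) * g i u + g i u * (∑ j, d i j * ((1 - z u j)
                  * (∑ l, W j l * pv l * z u l) - γ j * z u j))|
                ≤ |(∑ j, d i j * ((1 - z u j) * (∑ l, W j l * pv l * z u l)
                  - γ j * z u j)) * g i u| + |g i u * (∑ j, d i j * ((1 - z u j)
                  * (∑ l, W j l * pv l * z u l) - γ j * z u j))| := abs_add_le _ _
              _ ≤ 2*M^2 * M + M * (2*M^2) := by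
                  rw [abs_mul, abs_mul]
                  have h1 := mul_le_mul (hA u hu0 i) (hgb u hu0 i) (abs_nonneg _)
                    (by positivity)
                  have h2 := mul_le_mul (hgb u hu0 i) (hA u hu0 i) (abs_nonneg _) hM.le
                  linarith
        _ = 4*M^3 := by
            have e : ∀ i : Fin n, pv i * (2*M^2 * M + M * (2*M^2)) = (4*M^3) * pv i :=
              fun i => by ring
            rw [Finset.sum_congr rfl (fun i _ => e i), ← Finset.mul_sum, hpv1, mul_one]
        _ ≤ M^2*(6*M) := by nlinarith [pow_pos hM 3]
    have hcont : ContinuousOn (fun x => ∑ i, pv i * (g i x * g i x)) (Set.Icc p t) := by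
      have hzc : ∀ i, ContinuousOn (fun s => z s i) (Set.Ici 0) :=
        fun i u hu => (hode i u hu).continuousWithinAt
      have h1 : ContinuousOn (fun x => ∑ i, pv i * (g i x * g i x)) (Set.Ici 0) := by
        apply continuousOn_finset_sum
        intro i _
        apply continuousOn_const.mul
        apply ContinuousOn.mul <;>
          exact continuousOn_finset_sum _ fun j _ => continuousOn_const.mul (hzc j)
      exact h1.mono (fun u hu => le_trans hp hu.1)
    have := norm_image_sub_le_of_norm_deriv_right_le_segment hcont hfd hbound t
      (right_mem_Icc.2 hpt)
    rw [Real.norm_eq_abs] at this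
    have eft : ∀ x : ℝ, (∑ i, ((∑ j, W i j * pv j * z x j)
        - (∑ j, W' i j * pv j * z x j))^2 * pv i) = ∑ i, pv i * (g i x * g i x) :=
      fun x => Finset.sum_congr rfl fun i _ => by rw [hgsum i x]; ring
    rw [eft t, eft p]
    exact this

end

end SIS12

/-- Uniform robustness of the prediction problem: for fixed `M` and `0 < T₀ ≤ T`,
for every `ε > 0` there is a `δ > 0`, independent of the dimension `n` and of the
parameters, such that for all SIS parameters with weights and curing rates in `[0,M]`
and every symmetric `Ŵ` with entries in `[0,M]`: `H_{2,T₀} < δ ⟹ H_{2,T} < ε`. -/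
theorem stmt_12 (M T₀ T : ℝ) (hM : 0 < M) (hT₀ : 0 < T₀) (hTT : T₀ ≤ T) :
    ∀ ε > (0 : ℝ), ∃ δ > (0 : ℝ), ∀ n : ℕ, 0 < n →
      ∀ (W W' : Matrix (Fin n) (Fin n) ℝ) (pv γ : Fin n → ℝ) (z : ℝ → Fin n → ℝ),
        W.IsSymm → (∀ i j, W i j ∈ Set.Icc (0 : ℝ) M) →
        W'.IsSymm → (∀ i j, W' i j ∈ Set.Icc (0 : ℝ) M) →
        (∀ i, pv i ≥ 0) → (∑ i, pv i = 1) →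
        (∀ i, γ i ∈ Set.Icc (0 : ℝ) M) →
        (∀ i, z 0 i ∈ Set.Icc (0 : ℝ) 1) →
        (∀ i, ∀ t ∈ Set.Ici (0 : ℝ), HasDerivWithinAt (fun s => z s i)
          ((1 - z t i) * (∑ j, W i j * pv j * z t j) - γ i * z t i) (Set.Ici 0) t) →
        (∀ t ∈ Set.Ici (0 : ℝ), ∀ i, z t i ∈ Set.Icc (0 : ℝ) 1) →
        Real.sqrt (∫ t in (0 : ℝ)..T₀,
          ∑ i, ((∑ j, W i j * pv j * z t j) - (∑ j, W' i j * pv j * z t j)) ^ 2 * pv i)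
            < δ →
        Real.sqrt (∫ t in (0 : ℝ)..T,
          ∑ i, ((∑ j, W i j * pv j * z t j) - (∑ j, W' i j * pv j * z t j)) ^ 2 * pv i)
            < ε := by
  intro ε hε
  have hC : (0:ℝ) < M^2 := by positivity
  have hR : (0:ℝ) < 6*M := by positivity
  obtain ⟨δ, hδ, H⟩ := SIS12.main_analysis (M^2) (6*M) T₀ T hC hR hT₀ hTT ε hε
  refine ⟨δ, hδ, ?_⟩
  intro n hn W W' pv γ z hWs hW hW's hW' hpv hpv1 hγ hz0 hode hz01 hsmall
  obtain ⟨hsm, hbd, hcont, hlip⟩ :=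
    SIS12.f_all M hM W W' pv γ z hW hW' hpv hpv1 hγ hode hz01
  have h1 : (∫ t in (0:ℝ)..T₀, ∑ i, ((∑ j, W i j * pv j * z t j)
      - (∑ j, W' i j * pv j * z t j))^2 * pv i) < δ^2 := (Real.sqrt_lt' hδ).1 hsmall
  have h2 := H (fun t => ∑ i, ((∑ j, W i j * pv j * z t j)
      - (∑ j, W' i j * pv j * z t j))^2 * pv i)
    (hcont.mono (fun u hu => hu.1))
    (fun t _ => Finset.sum_nonneg fun i _ => mul_nonneg (sq_nonneg _) (hpv i))
    (fun p t hp hpt _ => hlip p t hp hpt) hsm hbd h1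
  exact (Real.sqrt_lt' hε).2 h2
end

section
/- Let p = (W, z(0), γ, π) be SIS parameters with W symmetric and nonnegative, z(0) ∈ [0,1]ⁿ, γ nonnegative, π nonnegative with Σ_i π_i = 1, with trajectory z, and let 0 < T₀ ≤ T. Then there exists a constant Λ (depending on p, T₀ and T) such that for every n×n matrix Ŵ (with Â := ŴΠ): H_{2,T} ≤ Λ·H_{2,T₀}. Equivalently, there exists Λ such that ‖v‖_{G(T)} ≤ Λ·‖v‖_{G(T₀)} for all v ∈ ℝⁿ, where ‖v‖²_{G(T)} := ∫₀^T ⟨v, z(t)⟩² dt. -/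
open MeasureTheory
open MeasureTheory

noncomputable def bl {n : ℕ} (g : Fin n → Fin n → ℝ) (v w : Fin n → ℝ) : ℝ :=
  ∑ i, ∑ j, v i * g i j * w j

theorem bl_symm {n : ℕ} {g : Fin n → Fin n → ℝ} (hs : ∀ i j, g i j = g j i)
    (v w : Fin n → ℝ) : bl g v w = bl g w v := by
  unfold bl
  rw [Finset.sum_comm]
  exact Finset.sum_congr rfl fun i _ => Finset.sum_congr rfl fun j _ => by rw [hs j i]; ring

theorem bl_add_add {n : ℕ} (g : Fin n → Fin n → ℝ) (a b : Fin n → ℝ) :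
    bl g (fun i => a i + b i) (fun i => a i + b i)
      = bl g a a + bl g a b + bl g b a + bl g b b := by
  unfold bl
  rw [← Finset.sum_add_distrib, ← Finset.sum_add_distrib, ← Finset.sum_add_distrib]
  refine Finset.sum_congr rfl fun i _ => ?_
  rw [← Finset.sum_add_distrib, ← Finset.sum_add_distrib, ← Finset.sum_add_distrib]
  exact Finset.sum_congr rfl fun j _ => by ring

theorem bl_smul_smul {n : ℕ} (g : Fin n → Fin n → ℝ) (c : ℝ) (a : Fin n → ℝ) :
    bl g (fun i => c * a i) (fun i => c * a i) = c ^ 2 * bl g a a := by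
  unfold bl
  rw [Finset.mul_sum]
  refine Finset.sum_congr rfl fun i _ => ?_
  rw [Finset.mul_sum]
  exact Finset.sum_congr rfl fun j _ => by ring

/-- Cauchy–Schwarz style vanishing for a PSD symmetric form. -/
theorem bl_null {n : ℕ} {g : Fin n → Fin n → ℝ} (hs : ∀ i j, g i j = g j i)
    (hp : ∀ v : Fin n → ℝ, 0 ≤ bl g v v) {v : Fin n → ℝ} (hv : bl g v v = 0)
    (w : Fin n → ℝ) : bl g v w = 0 := by
  by_contra hc
  set c := bl g v w with hcdef
  have key : ∀ t : ℝ, 0 ≤ bl g w w + 2 * t * c := by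
    intro t
    have h := hp (fun i => w i + t * v i)
    have hexp := bl_add_add g w (fun i => t * v i)
    have h1 : bl g (fun i => t * v i) (fun i => t * v i) = t ^ 2 * bl g v v :=
      bl_smul_smul g t v
    have h2 : bl g w (fun i => t * v i) = t * bl g w v := by
      unfold bl
      rw [Finset.mul_sum]
      refine Finset.sum_congr rfl fun i _ => ?_
      rw [Finset.mul_sum]
      exact Finset.sum_congr rfl fun j _ => by ring
    have h3 : bl g (fun i => t * v i) w = t * bl g v w := by
      unfold bl
      rw [Finset.mul_sum]
      refine Finset.sum_congr rfl fun i _ => ?_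
      rw [Finset.mul_sum]
      exact Finset.sum_congr rfl fun j _ => by ring
    rw [hexp, h1, h2, h3, hv, bl_symm hs w v] at h
    calc (0:ℝ) ≤ bl g w w + t * bl g v w + t * bl g v w + t ^ 2 * 0 := h
    _ = bl g w w + 2 * t * c := by rw [← hcdef]; ring
  have h2tc : 2 * (-(bl g w w + 1) / (2 * c)) * c = -(bl g w w + 1) := by
    field_simp
  have := key (-(bl g w w + 1) / (2 * c))
  rw [h2tc] at this
  linarith

section
variable {n : ℕ} {g₀ g : Fin n → Fin n → ℝ}

theorem quad_dom (hg₀s : ∀ i j, g₀ i j = g₀ j i) (hgs : ∀ i j, g i j = g j i)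
    (hg₀p : ∀ v : Fin n → ℝ, 0 ≤ bl g₀ v v) (hgp : ∀ v : Fin n → ℝ, 0 ≤ bl g v v)
    (hker : ∀ v : Fin n → ℝ, bl g₀ v v = 0 → bl g v v = 0) :
    ∃ Λ : ℝ, 0 ≤ Λ ∧ ∀ v : Fin n → ℝ, bl g v v ≤ Λ * bl g₀ v v := by
  classical
  set E := EuclideanSpace ℝ (Fin n) with hE
  let K : Submodule ℝ E :=
    { carrier := {v : E | ∀ w : Fin n → ℝ, bl g₀ v w = 0}
      add_mem' := by
        intro a b ha hb w
        have h := bl_add_add g₀ a b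
        show bl g₀ (fun i => a i + b i) w = 0
        have h2 : bl g₀ (fun i => a i + b i) w = bl g₀ a w + bl g₀ b w := by
          unfold bl
          rw [← Finset.sum_add_distrib]
          refine Finset.sum_congr rfl fun i _ => ?_
          rw [← Finset.sum_add_distrib]
          exact Finset.sum_congr rfl fun j _ => by ring
        rw [h2, ha w, hb w, add_zero]
      zero_mem' := by
        intro w
        show bl g₀ (fun _ => 0) w = 0
        unfold bl
        simp
      smul_mem' := by
        intro c a ha w
        show bl g₀ (fun i => c * a i) w = 0
        have h2 : bl g₀ (fun i => c * a i) w = c * bl g₀ a w := by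
          unfold bl
          rw [Finset.mul_sum]
          refine Finset.sum_congr rfl fun i _ => ?_
          rw [Finset.mul_sum]
          exact Finset.sum_congr rfl fun j _ => by ring
        rw [h2, ha w, mul_zero] }
  have hmemK : ∀ v : E, v ∈ K ↔ ∀ w : Fin n → ℝ, bl g₀ v w = 0 := fun v => Iff.rfl
  have hK0 : ∀ v : E, bl g₀ v v = 0 → v ∈ K := fun v hv => bl_null hg₀s hg₀p hv
  have hgK : ∀ v : E, v ∈ K → ∀ w : Fin n → ℝ, bl g v w = 0 := by
    intro v hv w
    exact bl_null hgs hgp (hker v ((hmemK v).mp hv v)) w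
  have hc : Continuous fun v : E => bl g v v := by
    unfold bl
    exact continuous_finset_sum _ fun i _ => continuous_finset_sum _ fun j _ =>
      (((EuclideanSpace.proj i).continuous.mul continuous_const).mul
        (EuclideanSpace.proj j).continuous)
  have hc₀ : Continuous fun v : E => bl g₀ v v := by
    unfold bl
    exact continuous_finset_sum _ fun i _ => continuous_finset_sum _ fun j _ =>
      (((EuclideanSpace.proj i).continuous.mul continuous_const).mul
        (EuclideanSpace.proj j).continuous)
  set S : Set E := Metric.sphere (0 : E) 1 ∩ (Kᗮ : Set E) with hSdef
  have hScpt : IsCompact S := (isCompact_sphere 0 1).inter_right K.isClosed_orthogonal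
  by_cases hS : S.Nonempty
  · obtain ⟨Mv, hMvS, hMmax⟩ := hScpt.exists_isMaxOn hS hc.continuousOn
    obtain ⟨mv, hmvS, hmmin⟩ := hScpt.exists_isMinOn hS hc₀.continuousOn
    set M := bl g Mv Mv with hMdef
    set m := bl g₀ mv mv with hmdef
    have hM0 : 0 ≤ M := hgp Mv
    have hm0 : 0 < m := by
      rcases lt_or_eq_of_le (hg₀p mv) with h | h
      · exact h
      · exfalso
        have hmvK : mv ∈ K := hK0 mv h.symm
        have hperp : mv ∈ Kᗮ := hmvS.2
        have hzero : mv = 0 := by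
          have := (Submodule.mem_orthogonal K mv).mp hperp mv hmvK
          exact inner_self_eq_zero.mp this
        have hnorm : ‖mv‖ = 1 := mem_sphere_zero_iff_norm.mp hmvS.1
        rw [hzero, norm_zero] at hnorm
        norm_num at hnorm
    refine ⟨M / m, div_nonneg hM0 hm0.le, ?_⟩
    intro v0
    set v : E := WithLp.toLp 2 v0 with hvdef
    obtain ⟨k, hk, w, hw, hvkw⟩ := K.exists_add_mem_mem_orthogonal v
    have hvfun : ∀ i, v0 i = k i + w i := fun i => by
      have := congrArg (fun x : E => x i) hvkw; simp only [hvdef] at this; exact this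
    have hsplit : ∀ (h : Fin n → Fin n → ℝ), (∀ u, bl h k u = 0) → (∀ i j, h i j = h j i) →
        bl h v0 v0 = bl h w w := by
      intro h hknull hhs
      have h1 : bl h v0 v0 = bl h (fun i => k i + w i) (fun i => k i + w i) := by
        congr 1 <;> exact funext hvfun
      rw [h1, bl_add_add, hknull k, hknull w, bl_symm hhs w k, hknull w]
      ring
    have hq0 : bl g₀ v0 v0 = bl g₀ w w := hsplit g₀ (fun u => (hmemK k).mp hk u) hg₀s
    have hq : bl g v0 v0 = bl g w w := hsplit g (fun u => hgK k hk u) hgs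
    by_cases hw0 : w = 0
    · rw [hq, hw0]
      have : bl g (0 : E) (0 : E) = 0 := by
        show bl g (fun _ => 0) (fun _ => 0) = 0
        unfold bl; simp
      rw [this]
      exact mul_nonneg (div_nonneg hM0 hm0.le) (hg₀p v0)
    · set c : ℝ := ‖w‖ with hcdef
      have hc0 : 0 < c := norm_pos_iff.mpr hw0
      set u : E := c⁻¹ • w with hudef
      have huS : u ∈ S := by
        constructor
        · rw [mem_sphere_zero_iff_norm, hudef, norm_smul, norm_inv, norm_norm, ← hcdef,
            inv_mul_cancel₀ hc0.ne']
        · exact Kᗮ.smul_mem _ hw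
      have hwcu : ∀ i, w i = c * u i := by
        intro i
        have : w = c • u := by
          rw [hudef, smul_smul, mul_inv_cancel₀ hc0.ne', one_smul]
        exact congrArg (fun x : E => x i) this
      have hscale : ∀ (h : Fin n → Fin n → ℝ), bl h w w = c ^ 2 * bl h u u := by
        intro h
        have h1 : bl h w w = bl h (fun i => c * u i) (fun i => c * u i) := by
          congr 1 <;> exact funext hwcu
        rw [h1, bl_smul_smul]
      have hub : bl g u u ≤ M := isMaxOn_iff.mp hMmax u huS
      have hlb : m ≤ bl g₀ u u := isMinOn_iff.mp hmmin u huS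
      rw [hq, hq0, hscale g, hscale g₀]
      have key : c ^ 2 * bl g u u ≤ M / m * (c ^ 2 * bl g₀ u u) := by
        have h1 : c ^ 2 * bl g u u ≤ c ^ 2 * M :=
          mul_le_mul_of_nonneg_left hub (by positivity)
        have h2 : M / m * (c ^ 2 * m) ≤ M / m * (c ^ 2 * bl g₀ u u) :=
          mul_le_mul_of_nonneg_left (mul_le_mul_of_nonneg_left hlb (by positivity))
            (div_nonneg hM0 hm0.le)
        have h3 : M / m * (c ^ 2 * m) = c ^ 2 * M := by
          field_simp
        linarith
      exact key
  · have hKtop : K = ⊤ := by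
      rw [← Submodule.orthogonal_eq_bot_iff]
      rw [Submodule.eq_bot_iff]
      intro x hx
      by_contra hx0
      exact hS ⟨‖x‖⁻¹ • x, by
        rw [mem_sphere_zero_iff_norm, norm_smul, norm_inv, norm_norm,
          inv_mul_cancel₀ (norm_ne_zero_iff.mpr hx0)], Kᗮ.smul_mem _ hx⟩
    refine ⟨0, le_rfl, fun v => ?_⟩
    have hvK : (WithLp.toLp 2 v : E) ∈ K := hKtop ▸ Submodule.mem_top
    rw [hker v ((hmemK (WithLp.toLp 2 v)).mp hvK v), zero_mul]

end


theorem vanish_extend {n : ℕ} (z : ℝ → Fin n → ℝ)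
    (hzan : ∀ i, AnalyticOnNhd ℝ (fun t => z t i) (Set.Ici (0 : ℝ)))
    {T₀ T : ℝ} (hT₀ : 0 < T₀) (hTT : T₀ ≤ T) (v : Fin n → ℝ)
    (h0 : ∫ t in (0:ℝ)..T₀, (∑ i, v i * z t i) ^ 2 = 0) :
    ∫ t in (0:ℝ)..T, (∑ i, v i * z t i) ^ 2 = 0 := by
  set f : ℝ → ℝ := fun t => ∑ i, v i * z t i with hfdef
  have hfan : AnalyticOnNhd ℝ f (Set.Ici (0:ℝ)) := by
    rw [show f = ∑ i, fun t => v i * z t i from by ext t; simp [hfdef, Finset.sum_apply]]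
    apply Finset.analyticOnNhd_sum
    intro i _
    exact analyticOnNhd_const.mul (hzan i)
  have hfc : ContinuousOn f (Set.Ici (0:ℝ)) := hfan.continuousOn
  have hsub : Set.uIcc (0:ℝ) T₀ ⊆ Set.Ici 0 := by
    rw [Set.uIcc_of_le hT₀.le]; exact Set.Icc_subset_Ici_self
  have hII : IntervalIntegrable (fun t => f t ^ 2) volume 0 T₀ :=
    (((hfc.mono hsub).pow 2)).intervalIntegrable
  rw [intervalIntegral.integral_of_le hT₀.le] at h0
  have hae : (fun t => f t ^ 2) =ᵐ[volume.restrict (Set.Ioc 0 T₀)] 0 := by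
    refine (MeasureTheory.setIntegral_eq_zero_iff_of_nonneg_ae ?_ ?_).mp h0
    · exact Filter.Eventually.of_forall fun t => sq_nonneg _
    · exact (intervalIntegrable_iff_integrableOn_Ioc_of_le hT₀.le).mp hII
  have hnull : volume ({t | ¬ f t ^ 2 = 0} ∩ Set.Ioc 0 T₀) = 0 := by
    have := MeasureTheory.ae_iff.mp hae
    rwa [MeasureTheory.Measure.restrict_apply' measurableSet_Ioc] at this
  have hfreq : ∃ᶠ t in nhdsWithin (T₀/2) {(T₀/2)}ᶜ, f t = 0 := by
    by_contra hcon
    rw [Filter.not_frequently] at hcon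
    rw [Filter.eventually_iff, Metric.mem_nhdsWithin_iff] at hcon
    obtain ⟨ε, hε, hball⟩ := hcon
    set b : ℝ := min (T₀/2 + ε) T₀ with hbdef
    have hab : T₀/2 < b := lt_min (by linarith) (by linarith)
    have hsubset : Set.Ioo (T₀/2) b ⊆ {t | ¬ f t ^ 2 = 0} ∩ Set.Ioc 0 T₀ := by
      intro t ht
      have ht1 : t ∈ Metric.ball (T₀/2) ε := by
        rw [Metric.mem_ball, Real.dist_eq, abs_of_nonneg (by linarith [ht.1])]
        have : t < T₀/2 + ε := lt_of_lt_of_le ht.2 (min_le_left _ _)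
        linarith
      have ht2 : t ∈ ({(T₀/2)}ᶜ : Set ℝ) := by
        simp only [Set.mem_compl_iff, Set.mem_singleton_iff]
        exact ne_of_gt ht.1
      have hft : ¬ f t = 0 := hball ⟨ht1, ht2⟩
      refine ⟨by simpa using pow_ne_zero 2 hft, ?_⟩
      exact ⟨by linarith [ht.1], le_trans ht.2.le (min_le_right _ _)⟩
    have : volume (Set.Ioo (T₀/2) b) = 0 := measure_mono_null hsubset hnull
    rw [Real.volume_Ioo] at this
    have : b - T₀/2 ≤ 0 := by
      by_contra hbt
      push_neg at hbt
      rw [ENNReal.ofReal_eq_zero] at this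
      linarith
    linarith
  have heq : Set.EqOn f 0 (Set.Ici (0:ℝ)) :=
    hfan.eqOn_zero_of_preconnected_of_frequently_eq_zero isPreconnected_Ici
      (by simp [Set.mem_Ici]; positivity) hfreq
  have : Set.EqOn (fun t => f t ^ 2) (fun _ => (0:ℝ)) (Set.uIcc 0 T) := by
    intro t ht
    have ht' : t ∈ Set.Ici (0:ℝ) := by
      rw [Set.uIcc_of_le (hT₀.le.trans hTT)] at ht
      exact ht.1
    simp [heq ht']
  rw [intervalIntegral.integral_congr this]
  simp

theorem expand_integral {n : ℕ} (z : ℝ → Fin n → ℝ) (b : ℝ)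
    (hzi : ∀ i j : Fin n, IntervalIntegrable (fun t => z t i * z t j) volume 0 b)
    (v : Fin n → ℝ) :
    ∫ t in (0:ℝ)..b, (∑ i, v i * z t i) ^ 2
      = ∑ i, ∑ j, v i * (∫ t in (0:ℝ)..b, z t i * z t j) * v j := by
  have hGint : ∀ i j : Fin n,
      IntervalIntegrable (fun t => (v i * v j) * (z t i * z t j)) volume 0 b :=
    fun i j => (hzi i j).const_mul _
  have hFint : ∀ i : Fin n,
      IntervalIntegrable (fun t => ∑ j, (v i * v j) * (z t i * z t j)) volume 0 b :=
    by
    intro i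
    have h := IntervalIntegrable.sum Finset.univ (fun j (_ : j ∈ Finset.univ) => hGint i j)
    have e : (∑ j : Fin n, fun t => (v i * v j) * (z t i * z t j))
        = fun t => ∑ j : Fin n, (v i * v j) * (z t i * z t j) := by
      funext t
      simp [Finset.sum_apply]
    rwa [e] at h
  have h1 : ∀ t, (∑ i, v i * z t i) ^ 2
      = ∑ i, ∑ j, (v i * v j) * (z t i * z t j) := by
    intro t
    rw [sq, Finset.sum_mul_sum]
    exact Finset.sum_congr rfl fun i _ => Finset.sum_congr rfl fun j _ => by ring
  have h2 : (∫ t in (0:ℝ)..b, (∑ i, v i * z t i) ^ 2)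
      = ∫ t in (0:ℝ)..b, ∑ i, ∑ j, (v i * v j) * (z t i * z t j) :=
    intervalIntegral.integral_congr fun t _ => h1 t
  rw [h2, intervalIntegral.integral_finset_sum (fun i _ => hFint i)]
  refine Finset.sum_congr rfl fun i _ => ?_
  rw [intervalIntegral.integral_finset_sum (fun j _ => hGint i j)]
  refine Finset.sum_congr rfl fun j _ => ?_
  rw [intervalIntegral.integral_const_mul]
  ring



/-- For fixed SIS parameters `p` and `0 < T₀ ≤ T` there is a constant `Λ = Λ(p,T₀,T)`
such that `H_{2,T} ≤ Λ · H_{2,T₀}` for every matrix `Ŵ`; equivalently there is a `Λ`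
with `‖v‖_{G(T)} ≤ Λ ‖v‖_{G(T₀)}` for all `v ∈ ℝⁿ`. -/
theorem stmt_13 {n : ℕ} (W : Matrix (Fin n) (Fin n) ℝ) (pv γ : Fin n → ℝ)
    (z : ℝ → Fin n → ℝ)
    (hWsymm : W.IsSymm) (hWpos : ∀ i j, 0 ≤ W i j)
    (hpv : ∀ i, 0 ≤ pv i) (hpv1 : ∑ i, pv i = 1) (hγ : ∀ i, 0 ≤ γ i)
    (hz0 : ∀ i, z 0 i ∈ Set.Icc (0 : ℝ) 1)
    (hode : ∀ i, ∀ t ∈ Set.Ici (0 : ℝ), HasDerivWithinAt (fun s => z s i)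
      ((1 - z t i) * (∑ j, W i j * pv j * z t j) - γ i * z t i) (Set.Ici 0) t)
    (hz01 : ∀ t ∈ Set.Ici (0 : ℝ), ∀ i, z t i ∈ Set.Icc (0 : ℝ) 1)
    (hzan : ∀ i, AnalyticOnNhd ℝ (fun t => z t i) (Set.Ici (0 : ℝ)))
    (T₀ T : ℝ) (hT₀ : 0 < T₀) (hTT : T₀ ≤ T) :
    (∃ Λ : ℝ, ∀ W' : Matrix (Fin n) (Fin n) ℝ,
      Real.sqrt (∫ t in (0 : ℝ)..T,
        ∑ i, ((∑ j, W i j * pv j * z t j) - (∑ j, W' i j * pv j * z t j)) ^ 2 * pv i)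
      ≤ Λ * Real.sqrt (∫ t in (0 : ℝ)..T₀,
        ∑ i, ((∑ j, W i j * pv j * z t j) - (∑ j, W' i j * pv j * z t j)) ^ 2 * pv i)) ∧
    (∃ Λ : ℝ, ∀ v : Fin n → ℝ,
      Real.sqrt (∫ t in (0 : ℝ)..T, (∑ i, v i * z t i) ^ 2)
        ≤ Λ * Real.sqrt (∫ t in (0 : ℝ)..T₀, (∑ i, v i * z t i) ^ 2)) := by

  have hT0le : (0:ℝ) ≤ T := hT₀.le.trans hTT
  have hcont : ∀ i, ContinuousOn (fun t => z t i) (Set.Ici 0) := fun i => (hzan i).continuousOn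
  have hsub : ∀ b : ℝ, 0 ≤ b → Set.uIcc (0:ℝ) b ⊆ Set.Ici 0 := fun b hb => by
    rw [Set.uIcc_of_le hb]; exact Set.Icc_subset_Ici_self
  have hzi : ∀ b : ℝ, 0 ≤ b → ∀ i j : Fin n,
      IntervalIntegrable (fun t => z t i * z t j) volume 0 b := fun b hb i j =>
    (((hcont i).mono (hsub b hb)).mul ((hcont j).mono (hsub b hb))).intervalIntegrable
  set g : Fin n → Fin n → ℝ := fun i j => ∫ t in (0:ℝ)..T, z t i * z t j with hgdef
  set g₀ : Fin n → Fin n → ℝ := fun i j => ∫ t in (0:ℝ)..T₀, z t i * z t j with hg₀def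
  have hq : ∀ v : Fin n → ℝ,
      (∫ t in (0:ℝ)..T, (∑ i, v i * z t i) ^ 2) = bl g v v := fun v =>
    expand_integral z T (hzi T hT0le) v
  have hq₀ : ∀ v : Fin n → ℝ,
      (∫ t in (0:ℝ)..T₀, (∑ i, v i * z t i) ^ 2) = bl g₀ v v := fun v =>
    expand_integral z T₀ (hzi T₀ hT₀.le) v
  have hgs : ∀ i j, g i j = g j i := fun i j =>
    intervalIntegral.integral_congr fun t _ => mul_comm _ _
  have hg₀s : ∀ i j, g₀ i j = g₀ j i := fun i j =>
    intervalIntegral.integral_congr fun t _ => mul_comm _ _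
  have hgp : ∀ v : Fin n → ℝ, 0 ≤ bl g v v := fun v => by
    rw [← hq v]
    exact intervalIntegral.integral_nonneg hT0le fun t _ => sq_nonneg _
  have hg₀p : ∀ v : Fin n → ℝ, 0 ≤ bl g₀ v v := fun v => by
    rw [← hq₀ v]
    exact intervalIntegral.integral_nonneg hT₀.le fun t _ => sq_nonneg _
  have hker : ∀ v : Fin n → ℝ, bl g₀ v v = 0 → bl g v v = 0 := fun v h =>
    (hq v).symm.trans (vanish_extend z hzan hT₀ hTT v ((hq₀ v).trans h))
  obtain ⟨Λ', hΛ'0, hdom⟩ := quad_dom hg₀s hgs hg₀p hgp hker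
  have part2 : ∀ v : Fin n → ℝ,
      Real.sqrt (∫ t in (0 : ℝ)..T, (∑ i, v i * z t i) ^ 2)
        ≤ Real.sqrt Λ' * Real.sqrt (∫ t in (0 : ℝ)..T₀, (∑ i, v i * z t i) ^ 2) := by
    intro v
    calc Real.sqrt (∫ t in (0 : ℝ)..T, (∑ i, v i * z t i) ^ 2)
        ≤ Real.sqrt (Λ' * ∫ t in (0 : ℝ)..T₀, (∑ i, v i * z t i) ^ 2) := by
          apply Real.sqrt_le_sqrt
          rw [hq v, hq₀ v]
          exact hdom v
      _ = Real.sqrt Λ' * Real.sqrt (∫ t in (0 : ℝ)..T₀, (∑ i, v i * z t i) ^ 2) :=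
          Real.sqrt_mul hΛ'0 _
  refine ⟨⟨Real.sqrt Λ', ?_⟩, ⟨Real.sqrt Λ', part2⟩⟩
  intro W'
  set d : Fin n → Fin n → ℝ := fun i j => (W i j - W' i j) * pv j with hddef
  have hpt : ∀ t, ∀ i : Fin n,
      ((∑ j, W i j * pv j * z t j) - (∑ j, W' i j * pv j * z t j))
        = ∑ j, d i j * z t j := by
    intro t i
    rw [← Finset.sum_sub_distrib]
    exact Finset.sum_congr rfl fun j _ => by simp only [hddef]; ring
  have hIb : ∀ b : ℝ, 0 ≤ b → ∀ i : Fin n,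
      IntervalIntegrable (fun t => (∑ j, d i j * z t j) ^ 2 * pv i) volume 0 b := by
    intro b hb i
    apply ContinuousOn.intervalIntegrable
    apply ContinuousOn.mul _ continuousOn_const
    apply ContinuousOn.pow
    exact continuousOn_finset_sum _ fun j _ =>
      continuousOn_const.mul ((hcont j).mono (hsub b hb))
  have hswap : ∀ b : ℝ, 0 ≤ b →
      (∫ t in (0:ℝ)..b,
        ∑ i, ((∑ j, W i j * pv j * z t j) - (∑ j, W' i j * pv j * z t j)) ^ 2 * pv i)
      = ∑ i, (∫ t in (0:ℝ)..b, (∑ j, d i j * z t j) ^ 2) * pv i := by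
    intro b hb
    have e1 : (∫ t in (0:ℝ)..b,
        ∑ i, ((∑ j, W i j * pv j * z t j) - (∑ j, W' i j * pv j * z t j)) ^ 2 * pv i)
        = ∫ t in (0:ℝ)..b, ∑ i, (∑ j, d i j * z t j) ^ 2 * pv i :=
      intervalIntegral.integral_congr fun t _ =>
        Finset.sum_congr rfl fun i _ => by rw [hpt t i]
    rw [e1, intervalIntegral.integral_finset_sum (fun i _ => hIb b hb i)]
    exact Finset.sum_congr rfl fun i _ => intervalIntegral.integral_mul_const _ _
  have hsum_le : ∑ i, (∫ t in (0:ℝ)..T, (∑ j, d i j * z t j) ^ 2) * pv i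
      ≤ Λ' * ∑ i, (∫ t in (0:ℝ)..T₀, (∑ j, d i j * z t j) ^ 2) * pv i := by
    rw [Finset.mul_sum]
    apply Finset.sum_le_sum
    intro i _
    have h1 : (∫ t in (0:ℝ)..T, (∑ j, d i j * z t j) ^ 2)
        ≤ Λ' * ∫ t in (0:ℝ)..T₀, (∑ j, d i j * z t j) ^ 2 := by
      rw [hq (d i), hq₀ (d i)]
      exact hdom (d i)
    calc (∫ t in (0:ℝ)..T, (∑ j, d i j * z t j) ^ 2) * pv i
        ≤ (Λ' * ∫ t in (0:ℝ)..T₀, (∑ j, d i j * z t j) ^ 2) * pv i :=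
          mul_le_mul_of_nonneg_right h1 (hpv i)
      _ = Λ' * ((∫ t in (0:ℝ)..T₀, (∑ j, d i j * z t j) ^ 2) * pv i) := by ring
  rw [hswap T hT0le, hswap T₀ hT₀.le]
  calc Real.sqrt (∑ i, (∫ t in (0:ℝ)..T, (∑ j, d i j * z t j) ^ 2) * pv i)
      ≤ Real.sqrt (Λ' * ∑ i, (∫ t in (0:ℝ)..T₀, (∑ j, d i j * z t j) ^ 2) * pv i) :=
        Real.sqrt_le_sqrt hsum_le
    _ = Real.sqrt Λ' * Real.sqrt (∑ i, (∫ t in (0:ℝ)..T₀, (∑ j, d i j * z t j) ^ 2) * pv i) :=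
        Real.sqrt_mul hΛ'0 _
end

section
/- Let 0 < T₀ ≤ T, let u : [0,T] × [0,1] → [0,1] be jointly measurable, and let N be a positive integer. Define λ_N := sup over f ∈ L²([0,1]) with ‖f‖₂ = 1 of (∫₀^T ⟨f, u(t)⟩² dt) / (∫₀^{T₀} ⟨f, u(t)⟩² dt + 1/N). Then the supremum is attained in the closed unit ball: there exists f ∈ L²([0,1]) with ‖f‖₂ ≤ 1 such that λ_N = (∫₀^T ⟨f, u(t)⟩² dt) / (∫₀^{T₀} ⟨f, u(t)⟩² dt + 1/N). -/
open MeasureTheory Set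

noncomputable section

namespace Stmt15Aux

abbrev μ0 : Measure ℝ := volume.restrict (Set.Icc (0:ℝ) 1)

instance : IsFiniteMeasure μ0 :=
  ⟨by rw [Measure.restrict_apply_univ]; simp [Real.volume_Icc]⟩

abbrev H : Type := Lp ℝ 2 μ0

example (h : H) : StronglyMeasurable (⇑h) := Lp.stronglyMeasurable h

variable {v : ℝ → ℝ → ℝ}

theorem measv (hv : Measurable (Function.uncurry v)) (t : ℝ) : Measurable (v t) :=
  hv.comp (measurable_const.prodMk measurable_id)

theorem memv (hv : Measurable (Function.uncurry v))
    (hv01 : ∀ t x, v t x ∈ Set.Icc (0:ℝ) 1) (t : ℝ) : MemLp (v t) 2 μ0 :=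
  MemLp.of_bound (measv hv t).aestronglyMeasurable 1
    (Filter.Eventually.of_forall fun x => by
      have := hv01 t x
      rw [Real.norm_eq_abs, abs_le]
      constructor <;> linarith [this.1, this.2])

/-- `U t : H` -/
def U (hv : Measurable (Function.uncurry v))
    (hv01 : ∀ t x, v t x ∈ Set.Icc (0:ℝ) 1) (t : ℝ) : H := (memv hv hv01 t).toLp (v t)

theorem inner_U (hv : Measurable (Function.uncurry v))
    (hv01 : ∀ t x, v t x ∈ Set.Icc (0:ℝ) 1)
    (h : H) (w : ℝ → ℝ) (hw : (⇑h : ℝ → ℝ) =ᵐ[μ0] w) (t : ℝ) :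
    (inner ℝ h (U hv hv01 t) : ℝ) = ∫ x in Set.Icc (0:ℝ) 1, w x * v t x := by
  rw [L2.inner_def]
  apply integral_congr_ae
  filter_upwards [hw, (memv hv hv01 t).coeFn_toLp] with x hx hx2
  rw [show (U hv hv01 t : ℝ → ℝ) x = v t x from hx2, RCLike.inner_apply]
  simp [hx, mul_comm]

theorem norm_U_le (hv : Measurable (Function.uncurry v))
    (hv01 : ∀ t x, v t x ∈ Set.Icc (0:ℝ) 1) (t : ℝ) : ‖U hv hv01 t‖ ≤ 1 := by
  have h1 : (‖U hv hv01 t‖ : ℝ) ^ 2 = ∫ x in Set.Icc (0:ℝ) 1, v t x * v t x := by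
    rw [← real_inner_self_eq_norm_sq]
    exact inner_U hv hv01 _ _ (memv hv hv01 t).coeFn_toLp t
  have h2 : (∫ x in Set.Icc (0:ℝ) 1, v t x * v t x) ≤ ∫ x in Set.Icc (0:ℝ) 1, (1:ℝ) := by
    apply integral_mono
    · exact ((integrable_const (1:ℝ)).mono'
        ((measv hv t).mul (measv hv t)).aestronglyMeasurable
        (Filter.Eventually.of_forall fun x => by
          have := hv01 t x
          rw [Real.norm_eq_abs, abs_le]
          constructor <;> nlinarith [this.1, this.2]))
    · exact integrable_const 1
    · intro x
      have := hv01 t x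
      show v t x * v t x ≤ 1
      nlinarith [this.1, this.2]
  have h3 : (∫ x in Set.Icc (0:ℝ) 1, (1:ℝ)) = 1 := by
    simp [Real.volume_Icc]
  nlinarith [norm_nonneg (U hv hv01 t)]

theorem meas_integral (hv : Measurable (Function.uncurry v)) {w : ℝ → ℝ}
    (hw : Measurable w) :
    Measurable fun t => ∫ x in Set.Icc (0:ℝ) 1, w x * v t x := by
  have : Measurable (Function.uncurry fun t x => w x * v t x) :=
    (hw.comp measurable_snd).mul hv
  exact (this.stronglyMeasurable.integral_prod_right).measurable

end Stmt15Aux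

namespace Stmt15Aux

def K : Set (WeakDual ℝ H) := WeakDual.toStrongDual ⁻¹' Metric.closedBall 0 1

theorem isCompact_K : IsCompact K :=
  WeakDual.isCompact_closedBall (0 : StrongDual ℝ H) 1

instance : SecondCountableTopology H := by
  haveI : Fact ((2:ENNReal) ≠ ⊤) := ⟨by norm_num⟩
  infer_instance

instance : FirstCountableTopology ↥K := by
  haveI : CompactSpace ↥K := isCompact_iff_compactSpace.mp isCompact_K
  obtain ⟨e, he⟩ := TopologicalSpace.exists_dense_seq H
  have hcont : Continuous (fun φ : ↥K => fun n : ℕ => (φ : WeakDual ℝ H) (e n)) :=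
    continuous_pi fun n => (WeakDual.eval_continuous (e n)).comp continuous_subtype_val
  have hinj : Function.Injective (fun φ : ↥K => fun n : ℕ => (φ : WeakDual ℝ H) (e n)) := by
    intro φ ψ h
    ext1
    refine DFunLike.ext _ _ ?_
    have := Continuous.ext_on he (map_continuous (φ : WeakDual ℝ H))
      (map_continuous (ψ : WeakDual ℝ H)) ?_
    · exact fun x => congrFun this x
    · rintro x ⟨n, rfl⟩
      exact congrFun h n
  exact (hcont.isClosedEmbedding hinj).toIsEmbedding.firstCountableTopology

/-- Riesz representation of a weak-dual element. -/
def rep (φ : WeakDual ℝ H) : H :=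
  (InnerProductSpace.toDual ℝ H).symm (WeakDual.toStrongDual φ)

theorem apply_U_eq (hv : Measurable (Function.uncurry v))
    (hv01 : ∀ t x, v t x ∈ Set.Icc (0:ℝ) 1) (φ : WeakDual ℝ H) (t : ℝ) :
    φ (U hv hv01 t) = ∫ x in Set.Icc (0:ℝ) 1, (rep φ : ℝ → ℝ) x * v t x := by
  rw [← inner_U hv hv01 (rep φ) _ Filter.EventuallyEq.rfl t, rep,
    InnerProductSpace.toDual_symm_apply]
  rfl

theorem meas_apply_U (hv : Measurable (Function.uncurry v))
    (hv01 : ∀ t x, v t x ∈ Set.Icc (0:ℝ) 1) (φ : WeakDual ℝ H) :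
    Measurable fun t => φ (U hv hv01 t) := by
  have := meas_integral hv (Lp.stronglyMeasurable (rep φ)).measurable (v := v)
  simpa [apply_U_eq hv hv01 φ] using this

theorem abs_apply_U_le (hv : Measurable (Function.uncurry v))
    (hv01 : ∀ t x, v t x ∈ Set.Icc (0:ℝ) 1) {φ : WeakDual ℝ H} (hφ : φ ∈ K) (t : ℝ) :
    |φ (U hv hv01 t)| ≤ 1 := by
  have h1 : ‖WeakDual.toStrongDual φ (U hv hv01 t)‖
      ≤ ‖WeakDual.toStrongDual φ‖ * ‖U hv hv01 t‖ :=
    ContinuousLinearMap.le_opNorm _ _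
  have h2 : ‖WeakDual.toStrongDual φ‖ ≤ 1 := by
    simpa [K, Metric.mem_closedBall, dist_zero_right] using hφ
  have h3 := norm_U_le hv hv01 t
  have h4 : ‖WeakDual.toStrongDual φ‖ * ‖U hv hv01 t‖ ≤ 1 :=
    mul_le_one₀ h2 (norm_nonneg _) h3
  calc |φ (U hv hv01 t)| = ‖WeakDual.toStrongDual φ (U hv hv01 t)‖ := rfl
    _ ≤ _ := h1
    _ ≤ 1 := h4

theorem continuousOn_Q (hv : Measurable (Function.uncurry v))
    (hv01 : ∀ t x, v t x ∈ Set.Icc (0:ℝ) 1) (a : ℝ) :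
    ContinuousOn (fun φ : WeakDual ℝ H =>
      ∫ t in Set.Icc (0:ℝ) a, (φ (U hv hv01 t))^2) K := by
  rw [continuousOn_iff_continuous_restrict]
  apply continuous_of_dominated (bound := fun _ => (1:ℝ))
  · exact fun φ => (((meas_apply_U hv hv01 (φ:WeakDual ℝ H)).pow_const 2)).aestronglyMeasurable
  · intro φ
    apply Filter.Eventually.of_forall
    intro t
    have := abs_apply_U_le hv hv01 φ.2 t
    rw [Real.norm_eq_abs]
    calc |((φ:WeakDual ℝ H) (U hv hv01 t))^2| = |(φ:WeakDual ℝ H) (U hv hv01 t)|^2 := by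
          rw [abs_pow]
      _ ≤ 1 := by nlinarith [abs_nonneg ((φ:WeakDual ℝ H) (U hv hv01 t))]
  · exact integrableOn_const measure_Icc_lt_top.ne
  · apply Filter.Eventually.of_forall
    intro t
    exact ((WeakDual.eval_continuous (U hv hv01 t)).comp continuous_subtype_val).pow 2

end Stmt15Aux

namespace Stmt15Aux

theorem exists_max (hv : Measurable (Function.uncurry v))
    (hv01 : ∀ t x, v t x ∈ Set.Icc (0:ℝ) 1) (T₀ T c : ℝ) (hc : 0 < c) :
    ∃ φ ∈ K, IsMaxOn (fun φ : WeakDual ℝ H =>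
      (∫ t in Set.Icc (0:ℝ) T, ((φ (U hv hv01 t)))^2) /
      ((∫ t in Set.Icc (0:ℝ) T₀, ((φ (U hv hv01 t)))^2) + c)) K φ := by
  have hK0 : (0 : WeakDual ℝ H) ∈ K := by
    simp [K, Metric.mem_closedBall]
  have hcont : ContinuousOn (fun φ : WeakDual ℝ H =>
      (∫ t in Set.Icc (0:ℝ) T, ((φ (U hv hv01 t)))^2) /
      ((∫ t in Set.Icc (0:ℝ) T₀, ((φ (U hv hv01 t)))^2) + c)) K := by
    apply ContinuousOn.div (continuousOn_Q hv hv01 T)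
      ((continuousOn_Q hv hv01 T₀).add continuousOn_const)
    intro φ _
    have : (0:ℝ) ≤ ∫ t in Set.Icc (0:ℝ) T₀, ((φ (U hv hv01 t)))^2 :=
      integral_nonneg fun t => sq_nonneg _
    rw [Pi.add_apply]
    exact ne_of_gt (by linarith)
  obtain ⟨φ, hφK, hmax⟩ := isCompact_K.exists_isMaxOn ⟨0, hK0⟩ hcont
  exact ⟨φ, hφK, hmax⟩

theorem norm_rep_le {φ : WeakDual ℝ H} (hφ : φ ∈ K) : ‖rep φ‖ ≤ 1 := by
  have : ‖rep φ‖ = ‖WeakDual.toStrongDual φ‖ :=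
    LinearIsometryEquiv.norm_map (InnerProductSpace.toDual ℝ H).symm _
  rw [this]
  simpa [K, Metric.mem_closedBall, dist_zero_right] using hφ

theorem inner_self_eq (h : H) (w : ℝ → ℝ) (hw : (⇑h : ℝ → ℝ) =ᵐ[μ0] w) :
    ‖h‖ ^ 2 = ∫ x in Set.Icc (0:ℝ) 1, w x ^ 2 := by
  rw [← real_inner_self_eq_norm_sq, L2.inner_def]
  apply integral_congr_ae
  filter_upwards [hw] with x hx
  rw [RCLike.inner_apply]
  simp [hx, sq]

end Stmt15Aux

theorem Stmt15Aux.aux_ratio (A B d n : ℝ) (hA : 0 ≤ A) (hB : 0 ≤ B)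
    (hd0 : 0 < d) (hd1 : d ≤ 1) (hn : 0 < n) :
    A / (B + n) ≤ (A / d) / (B / d + n) := by
  rw [div_le_div_iff₀ (by positivity) (by positivity)]
  have h1 : A * (B / d + n) = A * B / d + A * n := by ring
  have h2 : A / d * (B + n) = A * B / d + A * n / d := by ring
  rw [h1, h2]
  have h3 : A * n ≤ A * n / d := by
    rw [le_div_iff₀ hd0]
    nlinarith [mul_nonneg (mul_nonneg hA hn.le) (sub_nonneg.mpr hd1)]
  linarith

open Stmt15Aux in
/-- The supremum defining `λ_N` is attained in the closed unit ball of `L²([0,1])`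
(Lemma `l:lambda_eigenish`). -/
theorem stmt_15 (T₀ T : ℝ) (hT₀ : 0 < T₀) (hTT : T₀ ≤ T)
    (u : ℝ → ℝ → ℝ)
    (humeas : Measurable (Function.uncurry u))
    (hu01 : ∀ t ∈ Set.Icc (0 : ℝ) T, ∀ x ∈ Set.Icc (0 : ℝ) 1,
      u t x ∈ Set.Icc (0 : ℝ) 1)
    (N : ℕ) (hN : 0 < N) :
    ∃ f : ℝ → ℝ, Measurable f ∧
      (∫ x in Set.Icc (0 : ℝ) 1, (f x) ^ 2) ≤ 1 ∧
      sSup {r : ℝ | ∃ g : ℝ → ℝ, Measurable g ∧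
          (∫ x in Set.Icc (0 : ℝ) 1, (g x) ^ 2) = 1 ∧
          r = (∫ t in Set.Icc (0 : ℝ) T,
                (∫ x in Set.Icc (0 : ℝ) 1, g x * u t x) ^ 2) /
              ((∫ t in Set.Icc (0 : ℝ) T₀,
                (∫ x in Set.Icc (0 : ℝ) 1, g x * u t x) ^ 2) + 1 / (N : ℝ))} =
        (∫ t in Set.Icc (0 : ℝ) T,
          (∫ x in Set.Icc (0 : ℝ) 1, f x * u t x) ^ 2) /
        ((∫ t in Set.Icc (0 : ℝ) T₀,
          (∫ x in Set.Icc (0 : ℝ) 1, f x * u t x) ^ 2) + 1 / (N : ℝ)) := by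
  classical
  have hNpos : (0:ℝ) < 1 / (N : ℝ) := by positivity
  -- truncated kernel
  set v : ℝ → ℝ → ℝ := fun t x => max (min (u t x) 1) 0 with hvdef
  have hv : Measurable (Function.uncurry v) :=
    (humeas.min measurable_const).max measurable_const
  have hv01 : ∀ t x, v t x ∈ Set.Icc (0:ℝ) 1 := fun t x =>
    ⟨le_max_right _ _, max_le (min_le_right _ _) zero_le_one⟩
  have heq : ∀ t ∈ Set.Icc (0:ℝ) T, ∀ x ∈ Set.Icc (0:ℝ) 1, v t x = u t x := by
    intro t ht x hx
    have h := hu01 t ht x hx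
    simp only [hvdef]
    rw [min_eq_left h.2, max_eq_left h.1]
  have keyInner : ∀ (g : ℝ → ℝ), ∀ t ∈ Set.Icc (0:ℝ) T,
      (∫ x in Set.Icc (0:ℝ) 1, g x * u t x) = ∫ x in Set.Icc (0:ℝ) 1, g x * v t x := by
    intro g t ht
    refine setIntegral_congr_fun measurableSet_Icc fun x hx => ?_
    rw [heq t ht x hx]
  have keyT : ∀ g : ℝ → ℝ,
      (∫ t in Set.Icc (0:ℝ) T, (∫ x in Set.Icc (0:ℝ) 1, g x * u t x) ^ 2)
      = ∫ t in Set.Icc (0:ℝ) T, (∫ x in Set.Icc (0:ℝ) 1, g x * v t x) ^ 2 := by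
    intro g
    refine setIntegral_congr_fun measurableSet_Icc fun t ht => ?_
    rw [keyInner g t ht]
  have keyT₀ : ∀ g : ℝ → ℝ,
      (∫ t in Set.Icc (0:ℝ) T₀, (∫ x in Set.Icc (0:ℝ) 1, g x * u t x) ^ 2)
      = ∫ t in Set.Icc (0:ℝ) T₀, (∫ x in Set.Icc (0:ℝ) 1, g x * v t x) ^ 2 := by
    intro g
    refine setIntegral_congr_fun measurableSet_Icc fun t ht => ?_
    rw [keyInner g t (Set.Icc_subset_Icc_right hTT ht)]
  -- the maximizer
  obtain ⟨φ, hφK, hmax⟩ := exists_max hv hv01 T₀ T (1 / (N:ℝ)) hNpos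
  set h0 : H := rep φ with hh0
  set f : ℝ → ℝ := ⇑h0 with hfdef
  have hfmeas : Measurable f := (Lp.stronglyMeasurable h0).measurable
  have hfU : ∀ t, φ (U hv hv01 t) = ∫ x in Set.Icc (0:ℝ) 1, f x * v t x :=
    apply_U_eq hv hv01 φ
  have hinner : ∀ t, φ (U hv hv01 t) = (inner ℝ h0 (U hv hv01 t) : ℝ) := by
    intro t
    rw [hh0, rep, InnerProductSpace.toDual_symm_apply]
    rfl
  have hnorm : ‖h0‖ ^ 2 = ∫ x in Set.Icc (0:ℝ) 1, f x ^ 2 :=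
    inner_self_eq h0 f Filter.EventuallyEq.rfl
  have hh0le : ‖h0‖ ≤ 1 := norm_rep_le hφK
  have hf2 : (∫ x in Set.Icc (0:ℝ) 1, f x ^ 2) ≤ 1 := by
    rw [← hnorm]; nlinarith [norm_nonneg h0]
  -- abbreviations
  set Aφ : ℝ := ∫ t in Set.Icc (0:ℝ) T, (φ (U hv hv01 t)) ^ 2 with hAφ
  set Bφ : ℝ := ∫ t in Set.Icc (0:ℝ) T₀, (φ (U hv hv01 t)) ^ 2 with hBφ
  have hAnn : 0 ≤ Aφ := integral_nonneg fun t => sq_nonneg _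
  have hBnn : 0 ≤ Bφ := integral_nonneg fun t => sq_nonneg _
  refine ⟨f, hfmeas, hf2, ?_⟩
  -- rewrite RHS into Aφ / (Bφ + 1/N)
  have hRHS : (∫ t in Set.Icc (0 : ℝ) T,
          (∫ x in Set.Icc (0 : ℝ) 1, f x * u t x) ^ 2) /
        ((∫ t in Set.Icc (0 : ℝ) T₀,
          (∫ x in Set.Icc (0 : ℝ) 1, f x * u t x) ^ 2) + 1 / (N : ℝ))
      = Aφ / (Bφ + 1 / (N:ℝ)) := by
    rw [keyT f, keyT₀ f, hAφ, hBφ]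
    simp only [hfU]
  rw [hRHS]
  -- upper bound: every element of the set is at most Aφ / (Bφ + 1/N)
  have hub : ∀ r ∈ {r : ℝ | ∃ g : ℝ → ℝ, Measurable g ∧
          (∫ x in Set.Icc (0 : ℝ) 1, (g x) ^ 2) = 1 ∧
          r = (∫ t in Set.Icc (0 : ℝ) T,
                (∫ x in Set.Icc (0 : ℝ) 1, g x * u t x) ^ 2) /
              ((∫ t in Set.Icc (0 : ℝ) T₀,
                (∫ x in Set.Icc (0 : ℝ) 1, g x * u t x) ^ 2) + 1 / (N : ℝ))},
      r ≤ Aφ / (Bφ + 1 / (N:ℝ)) := by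
    rintro r ⟨g, hgmeas, hg2, rfl⟩
    have hInt : Integrable (fun x => g x ^ 2) μ0 := by
      by_contra hcon
      rw [integral_undef hcon] at hg2
      norm_num at hg2
    have hmem : MemLp g 2 μ0 :=
      (memLp_two_iff_integrable_sq hgmeas.aestronglyMeasurable).2 hInt
    set G : H := hmem.toLp g with hG
    have hGc : (⇑G : ℝ → ℝ) =ᵐ[μ0] g := hmem.coeFn_toLp
    have hGnorm : ‖G‖ ^ 2 = 1 := by
      rw [inner_self_eq G g hGc]; exact hg2
    have hGle : ‖G‖ ≤ 1 := by nlinarith [norm_nonneg G]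
    set φG : WeakDual ℝ H :=
      StrongDual.toWeakDual (InnerProductSpace.toDual ℝ H G) with hφG
    have hφGK : φG ∈ K := by
      have h1 : WeakDual.toStrongDual φG = InnerProductSpace.toDual ℝ H G :=
        StrongDual.toWeakDual.symm_apply_apply _
      simp only [K, Set.mem_preimage, Metric.mem_closedBall, dist_zero_right, h1]
      rw [(InnerProductSpace.toDual ℝ H).norm_map G]
      exact hGle
    have hGU : ∀ t, φG (U hv hv01 t) = ∫ x in Set.Icc (0:ℝ) 1, g x * v t x := by
      intro t
      have : φG (U hv hv01 t) = (inner ℝ G (U hv hv01 t) : ℝ) :=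
        InnerProductSpace.toDual_apply_apply
      rw [this, inner_U hv hv01 G g hGc t]
    calc (∫ t in Set.Icc (0 : ℝ) T,
                (∫ x in Set.Icc (0 : ℝ) 1, g x * u t x) ^ 2) /
              ((∫ t in Set.Icc (0 : ℝ) T₀,
                (∫ x in Set.Icc (0 : ℝ) 1, g x * u t x) ^ 2) + 1 / (N : ℝ))
        = (∫ t in Set.Icc (0:ℝ) T, (φG (U hv hv01 t)) ^ 2) /
          ((∫ t in Set.Icc (0:ℝ) T₀, (φG (U hv hv01 t)) ^ 2) + 1 / (N:ℝ)) := by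
          rw [keyT g, keyT₀ g]; simp only [hGU]
      _ ≤ Aφ / (Bφ + 1 / (N:ℝ)) := hmax hφGK
  -- nonemptiness
  have hone : (∫ x in Set.Icc (0:ℝ) 1, ((fun _ => (1:ℝ)) x) ^ 2) = 1 := by
    simp [Real.volume_Icc]
  have hne : {r : ℝ | ∃ g : ℝ → ℝ, Measurable g ∧
          (∫ x in Set.Icc (0 : ℝ) 1, (g x) ^ 2) = 1 ∧
          r = (∫ t in Set.Icc (0 : ℝ) T,
                (∫ x in Set.Icc (0 : ℝ) 1, g x * u t x) ^ 2) /
              ((∫ t in Set.Icc (0 : ℝ) T₀,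
                (∫ x in Set.Icc (0 : ℝ) 1, g x * u t x) ^ 2) + 1 / (N : ℝ))}.Nonempty := by
    exact ⟨_, (fun _ => (1:ℝ)), measurable_const, hone, rfl⟩
  have hbdd : BddAbove {r : ℝ | ∃ g : ℝ → ℝ, Measurable g ∧
          (∫ x in Set.Icc (0 : ℝ) 1, (g x) ^ 2) = 1 ∧
          r = (∫ t in Set.Icc (0 : ℝ) T,
                (∫ x in Set.Icc (0 : ℝ) 1, g x * u t x) ^ 2) /
              ((∫ t in Set.Icc (0 : ℝ) T₀,
                (∫ x in Set.Icc (0 : ℝ) 1, g x * u t x) ^ 2) + 1 / (N : ℝ))} :=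
    ⟨_, hub⟩
  refine le_antisymm (csSup_le hne hub) ?_
  -- lower bound
  by_cases hc : ‖h0‖ = 0
  · -- maximizer is zero: the value is 0
    have hz : h0 = 0 := norm_eq_zero.mp hc
    have hA0 : Aφ = 0 := by
      rw [hAφ]
      have : ∀ t, φ (U hv hv01 t) = 0 := fun t => by
        rw [hinner t, hz, inner_zero_left]
      simp [this]
    have hB0 : Bφ = 0 := by
      rw [hBφ]
      have : ∀ t, φ (U hv hv01 t) = 0 := fun t => by
        rw [hinner t, hz, inner_zero_left]
      simp [this]
    rw [hA0, hB0]
    rw [zero_div]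
    obtain ⟨r₁, hr₁⟩ := hne
    have hr₁nn : 0 ≤ r₁ := by
      obtain ⟨g, _, _, rfl⟩ := hr₁
      have h1 : (0:ℝ) ≤ ∫ t in Set.Icc (0:ℝ) T,
          (∫ x in Set.Icc (0:ℝ) 1, g x * u t x) ^ 2 := integral_nonneg fun t => sq_nonneg _
      have h2 : (0:ℝ) ≤ ∫ t in Set.Icc (0:ℝ) T₀,
          (∫ x in Set.Icc (0:ℝ) 1, g x * u t x) ^ 2 := integral_nonneg fun t => sq_nonneg _
      positivity
    exact le_trans hr₁nn (le_csSup hbdd hr₁)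
  · -- rescale the maximizer to the unit sphere
    set c : ℝ := ‖h0‖ with hcdef
    have hc0 : 0 < c := lt_of_le_of_ne (norm_nonneg _) (Ne.symm hc)
    set d : ℝ := c ^ 2 with hddef
    have hd0 : 0 < d := by positivity
    have hd1 : d ≤ 1 := by nlinarith
    set g₂ : ℝ → ℝ := fun x => f x / c with hg₂def
    have hg₂meas : Measurable g₂ := hfmeas.div_const c
    have hg₂sq : (∫ x in Set.Icc (0:ℝ) 1, g₂ x ^ 2) = 1 := by
      simp only [hg₂def, div_pow]
      rw [integral_div, ← hnorm, ← hddef]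
      exact div_self hd0.ne'
    have hg₂inner : ∀ t, (∫ x in Set.Icc (0:ℝ) 1, g₂ x * v t x)
        = (φ (U hv hv01 t)) / c := by
      intro t
      simp only [hg₂def, div_mul_eq_mul_div]
      rw [integral_div, hfU]
    have hval : (∫ t in Set.Icc (0 : ℝ) T,
                (∫ x in Set.Icc (0 : ℝ) 1, g₂ x * u t x) ^ 2) /
              ((∫ t in Set.Icc (0 : ℝ) T₀,
                (∫ x in Set.Icc (0 : ℝ) 1, g₂ x * u t x) ^ 2) + 1 / (N : ℝ))
        = (Aφ / d) / (Bφ / d + 1 / (N:ℝ)) := by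
      rw [keyT g₂, keyT₀ g₂]
      simp only [hg₂inner, div_pow, ← hddef]
      rw [integral_div, integral_div, hAφ, hBφ]
    have hmem2 : (Aφ / d) / (Bφ / d + 1 / (N:ℝ)) ∈ {r : ℝ | ∃ g : ℝ → ℝ, Measurable g ∧
          (∫ x in Set.Icc (0 : ℝ) 1, (g x) ^ 2) = 1 ∧
          r = (∫ t in Set.Icc (0 : ℝ) T,
                (∫ x in Set.Icc (0 : ℝ) 1, g x * u t x) ^ 2) /
              ((∫ t in Set.Icc (0 : ℝ) T₀,
                (∫ x in Set.Icc (0 : ℝ) 1, g x * u t x) ^ 2) + 1 / (N : ℝ))} :=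
      ⟨g₂, hg₂meas, hg₂sq, hval.symm⟩
    calc Aφ / (Bφ + 1 / (N:ℝ)) ≤ (Aφ / d) / (Bφ / d + 1 / (N:ℝ)) :=
          Stmt15Aux.aux_ratio Aφ Bφ d (1/(N:ℝ)) hAnn hBnn hd0 hd1 hNpos
      _ ≤ _ := le_csSup hbdd hmem2
end
end
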